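/- arXiv:2605.15849 — 3 statements merged into one kernel-verified Lean document; each statement's English description precedes it below -/
import Mathlib

section
/- Let H : ℝ^n → ℝ be a norm which is C² on ℝ^n \ {0} and whose unit ball {H ≤ 1} is strictly convex, and let H° be its polar norm (which is then also C¹ on ℝ^n \ {0}). Then for every ξ ≠ 0 one has H°(ξ) ∇H(∇H°(ξ)) = ξ and H(ξ) ∇H°(∇H(ξ)) = ξ. -/
open MeasureTheory Set Filter
open scoped ENNReal NNReal

noncomputable section

/-- `H` is an anisotropic norm: positive away from `0`, absolutely homogeneous,
and subadditive. -/
def IsAnisoNorm {n : ℕ} (H : EuclideanSpace ℝ (Fin n) → ℝ) : Prop :=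
  (∀ ξ : EuclideanSpace ℝ (Fin n), ξ ≠ 0 → 0 < H ξ) ∧
  (∀ (t : ℝ) (ξ : EuclideanSpace ℝ (Fin n)), H (t • ξ) = |t| * H ξ) ∧
  (∀ ξ η : EuclideanSpace ℝ (Fin n), H (ξ + η) ≤ H ξ + H η)

/-- The polar norm `H°(x) = sup_{ξ ≠ 0} ⟨x, ξ⟩ / H(ξ)`. -/
def polar {n : ℕ} (H : EuclideanSpace ℝ (Fin n) → ℝ)
    (x : EuclideanSpace ℝ (Fin n)) : ℝ :=
  ⨆ ξ : {ξ : EuclideanSpace ℝ (Fin n) // ξ ≠ 0},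
    (inner ℝ x (ξ : EuclideanSpace ℝ (Fin n)) : ℝ) / H ξ

set_option linter.unusedSectionVars false
set_option linter.unusedVariables false
set_option maxHeartbeats 1000000


section aux
variable {E : Type*} [NormedAddCommGroup E] [InnerProductSpace ℝ E]

/-- generalized polar -/
def pol (H : E → ℝ) (x : E) : ℝ :=
  ⨆ ξ : {ξ : E // ξ ≠ 0}, (inner ℝ x (ξ : E) : ℝ) / H ξ

open scoped Classical in
/-- the maximizer of `⟨x, ·⟩` on `{H = 1}` -/
def maxPt (H : E → ℝ) (x : E) : E :=
  if h : ∃ η : E, H η = 1 ∧ pol H x = (inner ℝ x η : ℝ) ∧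
      ∀ z : E, (inner ℝ x z : ℝ) ≤ pol H x * H z then h.choose else 0

variable {H : E → ℝ} (hpos : ∀ ξ : E, ξ ≠ 0 → 0 < H ξ)
  (hhom : ∀ (t : ℝ) (ξ : E), H (t • ξ) = |t| * H ξ)
  (hsub : ∀ ξ η : E, H (ξ + η) ≤ H ξ + H η)

include hhom in
lemma H_zero' : H 0 = 0 := by have := hhom 0 0; simpa using this

include hhom hsub in
lemma H_continuous' [FiniteDimensional ℝ E] : Continuous H := by
  have hc : ConvexOn ℝ univ H := by
    refine ⟨convex_univ, fun x _ y _ a b ha hb _ => ?_⟩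
    calc H (a • x + b • y) ≤ H (a • x) + H (b • y) := hsub _ _
      _ = a * H x + b * H y := by rw [hhom, hhom, abs_of_nonneg ha, abs_of_nonneg hb]
  simpa [continuousOn_univ] using hc.continuousOn isOpen_univ

include hpos hhom hsub in
lemma H_lower [FiniteDimensional ℝ E] [Nontrivial E] :
    ∃ a : ℝ, 0 < a ∧ ∀ ξ : E, a * ‖ξ‖ ≤ H ξ := by
  have hcont := H_continuous' hhom hsub
  have hcs : IsCompact (Metric.sphere (0 : E) 1) := isCompact_sphere 0 1
  have hne : (Metric.sphere (0 : E) 1).Nonempty := NormedSpace.sphere_nonempty.2 zero_le_one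
  obtain ⟨z, hz, hmin⟩ := hcs.exists_isMinOn hne hcont.continuousOn
  have hz0 : z ≠ 0 := by intro h; rw [mem_sphere_iff_norm, h] at hz; simp at hz
  refine ⟨H z, hpos z hz0, fun ξ => ?_⟩
  rcases eq_or_ne ξ 0 with rfl | hξ
  · simp [H_zero' hhom]
  · have hn : ‖ξ‖ ≠ 0 := norm_ne_zero_iff.2 hξ
    have hmem : ‖ξ‖⁻¹ • ξ ∈ Metric.sphere (0 : E) 1 := by
      simp [norm_smul, abs_of_nonneg (inv_nonneg.2 (norm_nonneg ξ)), inv_mul_cancel₀ hn]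
    have heq : H (‖ξ‖⁻¹ • ξ) = ‖ξ‖⁻¹ * H ξ := by
      rw [hhom, abs_of_nonneg (inv_nonneg.2 (norm_nonneg ξ))]
    have h2 : H z ≤ ‖ξ‖⁻¹ * H ξ := by simpa [heq] using hmin hmem
    have hnp : (0:ℝ) < ‖ξ‖ := norm_pos_iff.2 hξ
    calc H z * ‖ξ‖ ≤ (‖ξ‖⁻¹ * H ξ) * ‖ξ‖ := by nlinarith
      _ = H ξ := by field_simp

include hpos hhom hsub in
lemma S_compact [FiniteDimensional ℝ E] [Nontrivial E] :
    IsCompact {η : E | H η = 1} := by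
  obtain ⟨a, ha, hab⟩ := H_lower hpos hhom hsub
  have hSsub : {η : E | H η = 1} ⊆ Metric.closedBall (0 : E) a⁻¹ := by
    intro η hη
    rw [Metric.mem_closedBall, dist_zero_right]
    have h1 : a * ‖η‖ ≤ 1 := by have := hab η; rw [hη] at this; exact this
    have h3 : a * a⁻¹ = 1 := mul_inv_cancel₀ ha.ne'
    nlinarith [norm_nonneg η]
  exact (isCompact_closedBall (0:E) a⁻¹).of_isClosed_subset
    (isClosed_eq (H_continuous' hhom hsub) continuous_const) hSsub

include hpos hhom hsub in
lemma pol_spec [FiniteDimensional ℝ E] [Nontrivial E] (x : E) :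
    H (maxPt H x) = 1 ∧ pol H x = (inner ℝ x (maxPt H x) : ℝ) ∧
      ∀ z : E, (inner ℝ x z : ℝ) ≤ pol H x * H z := by
  have hex : ∃ η : E, H η = 1 ∧ pol H x = (inner ℝ x η : ℝ) ∧
      ∀ z : E, (inner ℝ x z : ℝ) ≤ pol H x * H z := by
    have hScompact := S_compact hpos hhom hsub
    have hSne : {η : E | H η = 1}.Nonempty := by
      obtain ⟨v, hv⟩ := exists_ne (0 : E)
      refine ⟨(H v)⁻¹ • v, ?_⟩
      have hv' : 0 < H v := hpos v hv
      simp only [mem_setOf_eq, hhom, abs_of_nonneg (inv_nonneg.2 hv'.le)]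
      field_simp
    obtain ⟨η₀, hη₀S, hmax⟩ := hScompact.exists_isMaxOn hSne
      (Continuous.continuousOn (show Continuous fun η : E => (inner ℝ x η : ℝ) from
        continuous_const.inner continuous_id))
    have hη₀ : H η₀ = 1 := hη₀S
    have hη₀0 : η₀ ≠ 0 := by
      intro h; rw [h, H_zero' hhom] at hη₀; norm_num at hη₀
    have key : ∀ z : E, z ≠ 0 → (inner ℝ x z : ℝ) / H z ≤ (inner ℝ x η₀ : ℝ) := by
      intro z hz
      have hz' : 0 < H z := hpos z hz
      have hmem : (H z)⁻¹ • z ∈ {η : E | H η = 1} := by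
        simp only [mem_setOf_eq, hhom, abs_of_nonneg (inv_nonneg.2 hz'.le)]
        field_simp
      have := hmax hmem
      have heq : (inner ℝ x ((H z)⁻¹ • z) : ℝ) = (inner ℝ x z : ℝ) / H z := by
        rw [real_inner_smul_right]; ring
      simpa [heq] using this
    have hbdd : BddAbove (Set.range fun ξ : {ξ : E // ξ ≠ 0} => (inner ℝ x (ξ:E) : ℝ) / H ξ) := by
      refine ⟨(inner ℝ x η₀ : ℝ), ?_⟩
      rintro y ⟨⟨z, hz⟩, rfl⟩
      exact key z hz
    haveI : Nonempty {ξ : E // ξ ≠ 0} := ⟨⟨η₀, hη₀0⟩⟩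
    have hpol : pol H x = (inner ℝ x η₀ : ℝ) := by
      refine le_antisymm (ciSup_le fun ⟨z, hz⟩ => key z hz) ?_
      have := le_ciSup hbdd (⟨η₀, hη₀0⟩ : {ξ : E // ξ ≠ 0})
      simpa [hη₀, pol] using this
    refine ⟨η₀, hη₀, hpol, fun z => ?_⟩
    rcases eq_or_ne z 0 with rfl | hz
    · simp [H_zero' hhom]
    · have hz' : 0 < H z := hpos z hz
      have := key z hz
      rw [div_le_iff₀ hz'] at this
      rw [hpol]; linarith
  rw [maxPt, dif_pos hex]
  exact hex.choose_spec

include hpos hhom hsub in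
lemma pol_pos [FiniteDimensional ℝ E] {x : E} (hx : x ≠ 0) : 0 < pol H x := by
  haveI : Nontrivial E := nontrivial_of_ne x 0 hx
  obtain ⟨_, _, hub⟩ := pol_spec hpos hhom hsub x
  have h1 := hub x
  have h2 : (inner ℝ x x : ℝ) = ‖x‖ ^ 2 := real_inner_self_eq_norm_sq x
  have hxn : (0:ℝ) < ‖x‖ := norm_pos_iff.2 hx
  have h3 : (0:ℝ) < ‖x‖ ^ 2 := by positivity
  have h4 : 0 < H x := hpos x hx
  nlinarith

include hpos hhom hsub in
lemma max_unique [FiniteDimensional ℝ E]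
    (hconv : StrictConvex ℝ {ξ : E | H ξ ≤ 1}) {x η₁ η₂ : E} (hx : x ≠ 0)
    (h1 : H η₁ ≤ 1) (e1 : (inner ℝ x η₁ : ℝ) = pol H x)
    (h2 : H η₂ ≤ 1) (e2 : (inner ℝ x η₂ : ℝ) = pol H x) : η₁ = η₂ := by
  haveI : Nontrivial E := nontrivial_of_ne x 0 hx
  by_contra hne
  have hP := pol_pos hpos hhom hsub hx
  obtain ⟨_, _, hub⟩ := pol_spec hpos hhom hsub x
  have hmem : (1/2 : ℝ) • η₁ + (1/2 : ℝ) • η₂ ∈ interior {ξ : E | H ξ ≤ 1} :=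
    hconv h1 h2 hne (by norm_num) (by norm_num) (by norm_num)
  set m := (1/2 : ℝ) • η₁ + (1/2 : ℝ) • η₂ with hm
  have hxm : (inner ℝ x m : ℝ) = pol H x := by
    rw [hm, inner_add_right, real_inner_smul_right, real_inner_smul_right, e1, e2]; ring
  -- find c > 1 with c • m ∈ {H ≤ 1}
  have hnb : {ξ : E | H ξ ≤ 1} ∈ nhds m := mem_interior_iff_mem_nhds.1 hmem
  have htend : Tendsto (fun c : ℝ => c • m) (nhds 1) (nhds m) := by
    have : Tendsto (fun c : ℝ => c • m) (nhds 1) (nhds ((1:ℝ) • m)) :=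
      (continuous_id.smul continuous_const).tendsto 1
    simpa using this
  have hev : ∀ᶠ c : ℝ in nhdsWithin 1 (Ioi 1), H (c • m) ≤ 1 :=
    ((htend.eventually hnb).filter_mono nhdsWithin_le_nhds)
  obtain ⟨c, hc, hc1⟩ := (hev.and self_mem_nhdsWithin).exists
  have hcc : (1:ℝ) < c := hc1
  have := hub (c • m)
  rw [real_inner_smul_right, hxm] at this
  have hH : pol H x * H (c • m) ≤ pol H x * 1 :=
    mul_le_mul_of_nonneg_left hc hP.le
  nlinarith

end aux
end
noncomputable section
section aux2
open Set Filter
open scoped NNReal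
variable {E : Type*} [NormedAddCommGroup E] [InnerProductSpace ℝ E]
variable {H : E → ℝ} (hpos : ∀ ξ : E, ξ ≠ 0 → 0 < H ξ)
  (hhom : ∀ (t : ℝ) (ξ : E), H (t • ξ) = |t| * H ξ)
  (hsub : ∀ ξ η : E, H (ξ + η) ≤ H ξ + H η)

include hpos hhom hsub in
lemma pol_continuous [FiniteDimensional ℝ E] [Nontrivial E] : Continuous (pol H) := by
  obtain ⟨a, ha, hab⟩ := H_lower hpos hhom hsub
  have key : ∀ x y : E, pol H x - pol H y ≤ a⁻¹ * ‖x - y‖ := by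
    intro x y
    obtain ⟨hx1, hx2, _⟩ := pol_spec hpos hhom hsub x
    obtain ⟨_, _, hyub⟩ := pol_spec hpos hhom hsub y
    have hnorm : ‖maxPt H x‖ ≤ a⁻¹ := by
      have h1 : a * ‖maxPt H x‖ ≤ 1 := by rw [← hx1]; exact hab _
      have h3 : a * a⁻¹ = 1 := mul_inv_cancel₀ ha.ne'
      nlinarith [norm_nonneg (maxPt H x)]
    have h4 : (inner ℝ y (maxPt H x) : ℝ) ≤ pol H y := by
      have := hyub (maxPt H x); rwa [hx1, mul_one] at this
    have h5 : (inner ℝ x (maxPt H x) : ℝ) - (inner ℝ y (maxPt H x) : ℝ)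
        ≤ a⁻¹ * ‖x - y‖ := by
      have h6 : (inner ℝ (x - y) (maxPt H x) : ℝ) ≤ ‖x - y‖ * ‖maxPt H x‖ :=
        real_inner_le_norm _ _
      rw [inner_sub_left] at h6
      have h7 : ‖x - y‖ * ‖maxPt H x‖ ≤ ‖x - y‖ * a⁻¹ :=
        mul_le_mul_of_nonneg_left hnorm (norm_nonneg _)
      nlinarith [norm_nonneg (x - y)]
    rw [hx2]; linarith
  have hlip : LipschitzWith (Real.toNNReal a⁻¹) (pol H) := by
    refine LipschitzWith.of_dist_le_mul fun x y => ?_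
    rw [Real.dist_eq, abs_sub_le_iff]
    have hc : ((Real.toNNReal a⁻¹ : ℝ≥0) : ℝ) = a⁻¹ :=
      Real.coe_toNNReal _ (inv_nonneg.2 ha.le)
    rw [hc, dist_eq_norm]
    constructor
    · exact key x y
    · have := key y x
      rwa [norm_sub_rev] at this
  exact hlip.continuous

include hpos hhom hsub in
lemma maxPt_continuous [FiniteDimensional ℝ E]
    (hconv : StrictConvex ℝ {ξ : E | H ξ ≤ 1}) {x : E} (hx : x ≠ 0) :
    Tendsto (maxPt H) (nhds x) (nhds (maxPt H x)) := by
  haveI : Nontrivial E := nontrivial_of_ne x 0 hx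
  have hcontH := H_continuous' hhom hsub
  have hcontP := pol_continuous hpos hhom hsub
  rw [tendsto_nhds]
  intro U hU haU
  by_contra hcon
  -- the bad filter
  set L : Filter E := nhds x ⊓ 𝓟 ((maxPt H ⁻¹' U)ᶜ) with hL
  haveI hLne : L.NeBot := by
    constructor
    intro hbot
    rw [hL, inf_principal_eq_bot, compl_compl] at hbot
    exact hcon hbot
  set Φ : E → E × E := fun y => (y, maxPt H y) with hΦ
  -- the filter maps into a compact set
  have hKcomp : IsCompact ((Metric.closedBall x 1) ×ˢ {η : E | H η = 1}) :=
    (isCompact_closedBall x 1).prod (S_compact hpos hhom hsub)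
  have hle : map Φ L ≤ 𝓟 ((Metric.closedBall x 1) ×ˢ {η : E | H η = 1}) := by
    rw [le_principal_iff, mem_map]
    have h1 : Metric.closedBall x 1 ∈ nhds x := Metric.closedBall_mem_nhds x one_pos
    have h2 : Metric.closedBall x 1 ∈ L := by rw [hL]; exact mem_inf_of_left h1
    filter_upwards [h2] with y hy
    exact ⟨hy, (pol_spec hpos hhom hsub y).1⟩
  obtain ⟨⟨x', z⟩, hmemK, hclust⟩ := hKcomp hle
  -- x' = x
  have hfst : Tendsto Prod.fst (map Φ L) L := by
    rw [tendsto_map'_iff]; exact tendsto_id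
  have hclx : ClusterPt x' L := hclust.map continuousAt_fst hfst
  have hLle : L ≤ nhds x := by rw [hL]; exact inf_le_left
  have hx'x : x' = x := by
    have h5 : NeBot (nhds x' ⊓ L) := hclx
    exact eq_of_nhds_neBot (@neBot_of_le _ _ _ h5 (inf_le_inf_left _ hLle))
  rw [hx'x] at hclust
  -- (x, z) lies in the closed set of "maximizing pairs outside U"
  set C : Set (E × E) := {p : E × E | H p.2 = 1 ∧ (inner ℝ p.1 p.2 : ℝ) = pol H p.1 ∧ p.2 ∈ Uᶜ}
    with hC
  have hCclosed : IsClosed C := by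
    refine IsClosed.inter (isClosed_eq (hcontH.comp continuous_snd) continuous_const) ?_
    refine IsClosed.inter (isClosed_eq ?_ (hcontP.comp continuous_fst)) ?_
    · exact continuous_fst.inner continuous_snd
    · exact (hU.isClosed_compl).preimage continuous_snd
  have hleC : map Φ L ≤ 𝓟 C := by
    rw [le_principal_iff, mem_map]
    have h2 : (maxPt H ⁻¹' U)ᶜ ∈ L := by rw [hL]; exact mem_inf_of_right (mem_principal_self _)
    filter_upwards [h2] with y hy
    obtain ⟨hy1, hy2, _⟩ := pol_spec hpos hhom hsub y
    exact ⟨hy1, hy2.symm, hy⟩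
  have hmemC : (x, z) ∈ C := hCclosed.closure_subset
    (mem_closure_iff_clusterPt.2 (hclust.mono hleC))
  obtain ⟨hz1, hz2, hz3⟩ := hmemC
  -- uniqueness forces z = maxPt H x ∈ U
  obtain ⟨hm1, hm2, _⟩ := pol_spec hpos hhom hsub x
  have : z = maxPt H x :=
    max_unique hpos hhom hsub hconv hx hz1.le hz2 hm1.le hm2.symm
  rw [this] at hz3
  exact hz3 haU

include hpos hhom hsub in
lemma pol_hasGradientAt [FiniteDimensional ℝ E]
    (hconv : StrictConvex ℝ {ξ : E | H ξ ≤ 1}) {x : E} (hx : x ≠ 0) :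
    HasGradientAt (pol H) (maxPt H x) x := by
  haveI : Nontrivial E := nontrivial_of_ne x 0 hx
  rw [hasGradientAt_iff_isLittleO]
  rw [Asymptotics.isLittleO_iff]
  intro c hc
  have hcont := maxPt_continuous hpos hhom hsub hconv hx
  have hev : ∀ᶠ y in nhds x, ‖maxPt H y - maxPt H x‖ ≤ c := by
    have : ∀ᶠ y in nhds x, maxPt H y ∈ Metric.closedBall (maxPt H x) c :=
      hcont (Metric.closedBall_mem_nhds _ hc)
    filter_upwards [this] with y hy
    rwa [Metric.mem_closedBall, dist_eq_norm] at hy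
  filter_upwards [hev] with y hy
  obtain ⟨hx1, hx2, hxub⟩ := pol_spec hpos hhom hsub x
  obtain ⟨hy1, hy2, hyub⟩ := pol_spec hpos hhom hsub y
  -- lower bound on the error
  have hlow : (0:ℝ) ≤ pol H y - pol H x - (inner ℝ (maxPt H x) (y - x) : ℝ) := by
    have h1 : (inner ℝ y (maxPt H x) : ℝ) ≤ pol H y := by
      have := hyub (maxPt H x); rwa [hx1, mul_one] at this
    have h2 : (inner ℝ (maxPt H x) (y - x) : ℝ)
        = (inner ℝ y (maxPt H x) : ℝ) - (inner ℝ x (maxPt H x) : ℝ) := by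
      rw [real_inner_comm, inner_sub_left]
    rw [h2, hx2]; linarith
  -- upper bound on the error
  have hup : pol H y - pol H x - (inner ℝ (maxPt H x) (y - x) : ℝ)
      ≤ ‖y - x‖ * ‖maxPt H y - maxPt H x‖ := by
    have h1 : (inner ℝ x (maxPt H y) : ℝ) ≤ pol H x := by
      have := hxub (maxPt H y); rwa [hy1, mul_one] at this
    have h2 : (inner ℝ (y - x) (maxPt H y - maxPt H x) : ℝ)
        ≤ ‖y - x‖ * ‖maxPt H y - maxPt H x‖ := real_inner_le_norm _ _
    have h3 : (inner ℝ (y - x) (maxPt H y - maxPt H x) : ℝ)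
        = (inner ℝ y (maxPt H y) : ℝ) - (inner ℝ x (maxPt H y) : ℝ)
        - ((inner ℝ y (maxPt H x) : ℝ) - (inner ℝ x (maxPt H x) : ℝ)) := by
      rw [inner_sub_left, inner_sub_right, inner_sub_right]; ring
    have h4 : (inner ℝ (maxPt H x) (y - x) : ℝ)
        = (inner ℝ y (maxPt H x) : ℝ) - (inner ℝ x (maxPt H x) : ℝ) := by
      rw [real_inner_comm, inner_sub_left]
    rw [h4, hy2, hx2]
    nlinarith [h2, h3, h1]
  rw [Real.norm_eq_abs, abs_of_nonneg hlow]
  calc pol H y - pol H x - (inner ℝ (maxPt H x) (y - x) : ℝ)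
      ≤ ‖y - x‖ * ‖maxPt H y - maxPt H x‖ := hup
    _ ≤ ‖y - x‖ * c := mul_le_mul_of_nonneg_left hy (norm_nonneg _)
    _ = c * ‖y - x‖ := by ring

end aux2
end

noncomputable section auxD
open Set Filter
variable {E : Type*} [NormedAddCommGroup E] [InnerProductSpace ℝ E] [CompleteSpace E]
variable {H : E → ℝ} (hpos : ∀ ξ : E, ξ ≠ 0 → 0 < H ξ)
  (hhom : ∀ (t : ℝ) (ξ : E), H (t • ξ) = |t| * H ξ)
  (hsub : ∀ ξ η : E, H (ξ + η) ≤ H ξ + H η)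

lemma dirDeriv {p : E} (hd : DifferentiableAt ℝ H p) (η : E) :
    HasDerivAt (fun t : ℝ => H (p + t • η)) (fderiv ℝ H p η) 0 := by
  have hline : HasDerivAt (fun t : ℝ => p + t • η) η 0 := by
    simpa using ((hasDerivAt_id (0:ℝ)).smul_const η).const_add p
  have hf : HasFDerivAt H (fderiv ℝ H p) (p + (0:ℝ) • η) := by simpa using hd.hasFDerivAt
  have := hf.comp_hasDerivAt 0 hline
  exact this

include hsub hhom in
lemma fderiv_le {p : E} (hd : DifferentiableAt ℝ H p) (η : E) :
    fderiv ℝ H p η ≤ H η := by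
  have hder := dirDeriv hd η
  have htend := hasDerivAt_iff_tendsto_slope.1 hder
  have htend' : Tendsto (slope (fun t : ℝ => H (p + t • η)) 0) (nhdsWithin 0 (Ioi 0))
      (nhds (fderiv ℝ H p η)) :=
    htend.mono_left (nhdsWithin_mono _ (fun t ht => ne_of_gt ht))
  refine le_of_tendsto htend' ?_
  filter_upwards [self_mem_nhdsWithin] with t (ht : (0:ℝ) < t)
  have h1 : H (p + t • η) ≤ H p + t * H η := by
    have := hsub p (t • η)
    rw [hhom, abs_of_pos ht] at this; exact this
  rw [slope_def_field]
  have : (H (p + t • η) - H (p + (0:ℝ) • η)) / (t - 0) ≤ H η := by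
    rw [div_le_iff₀ (by linarith)]
    simp only [zero_smul, add_zero, sub_zero]
    nlinarith
  simpa [div_eq_inv_mul] using this

lemma fderiv_ge {p : E} (hd : DifferentiableAt ℝ H p) {v : E}
    (hv : ∀ z : E, (inner ℝ v z : ℝ) ≤ H z) (hvp : (inner ℝ v p : ℝ) = H p) (η : E) :
    (inner ℝ v η : ℝ) ≤ fderiv ℝ H p η := by
  have hder := dirDeriv hd η
  have htend := hasDerivAt_iff_tendsto_slope.1 hder
  have htend' : Tendsto (slope (fun t : ℝ => H (p + t • η)) 0) (nhdsWithin 0 (Ioi 0))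
      (nhds (fderiv ℝ H p η)) :=
    htend.mono_left (nhdsWithin_mono _ (fun t ht => ne_of_gt ht))
  refine ge_of_tendsto htend' ?_
  filter_upwards [self_mem_nhdsWithin] with t (ht : (0:ℝ) < t)
  have h1 : H p + t * (inner ℝ v η : ℝ) ≤ H (p + t • η) := by
    have := hv (p + t • η)
    rw [inner_add_right, real_inner_smul_right, hvp] at this
    linarith
  rw [slope_def_field]
  have : (inner ℝ v η : ℝ) ≤ (H (p + t • η) - H (p + (0:ℝ) • η)) / (t - 0) := by
    rw [le_div_iff₀ (by linarith)]
    simp only [zero_smul, add_zero, sub_zero]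
    nlinarith
  simpa [div_eq_inv_mul] using this

/-- A differentiable point of a convex positively-homogeneous function has a unique
subgradient, which is then the gradient. -/
lemma gradient_eq_of_subgradient {p : E} (hd : DifferentiableAt ℝ H p) {v : E}
    (hv : ∀ z : E, (inner ℝ v z : ℝ) ≤ H z) (hvp : (inner ℝ v p : ℝ) = H p) :
    gradient H p = v := by
  have hgrad : HasGradientAt H (gradient H p) p := hd.hasGradientAt
  have hfd : ∀ η : E, (inner ℝ (gradient H p) η : ℝ) = fderiv ℝ H p η := by
    intro η
    have := hgrad.hasFDerivAt.fderiv
    rw [this]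
    simp [InnerProductSpace.toDual_apply_apply]
  have hkey : ∀ η : E, (inner ℝ v η : ℝ) = (inner ℝ (gradient H p) η : ℝ) := by
    intro η
    have h1 := fderiv_ge hd hv hvp η
    have h2 := fderiv_ge hd hv hvp (-η)
    rw [inner_neg_right] at h2
    rw [hfd] at *
    have h3 : fderiv ℝ H p (-η) = -(fderiv ℝ H p η) := by rw [map_neg]
    rw [h3] at h2
    linarith
  have : ∀ η : E, (inner ℝ (v - gradient H p) η : ℝ) = 0 := by
    intro η; rw [inner_sub_left, hkey η]; ring
  have := inner_self_eq_zero.1 (this (v - gradient H p))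
  have h : v - gradient H p = 0 := this
  rw [sub_eq_zero] at h
  exact h.symm

include hhom in
lemma euler {p : E} (hp : p ≠ 0) (hd : DifferentiableAt ℝ H p) :
    fderiv ℝ H p p = H p := by
  have hline : HasDerivAt (fun t : ℝ => t • p) p 1 := by
    simpa using (hasDerivAt_id (1:ℝ)).smul_const p
  have hcomp : HasDerivAt (fun t : ℝ => H (t • p)) (fderiv ℝ H p p) 1 := by
    have hf : HasFDerivAt H (fderiv ℝ H p) ((1:ℝ) • p) := by simpa using hd.hasFDerivAt
    have := hf.comp_hasDerivAt 1 hline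
    exact this
  have heq : (fun t : ℝ => H (t • p)) =ᶠ[nhds (1:ℝ)] fun t => t * H p := by
    filter_upwards [eventually_gt_nhds (by norm_num : (0:ℝ) < 1)] with t ht
    rw [hhom, abs_of_pos ht]
  have hcomp' : HasDerivAt (fun t : ℝ => t * H p) (fderiv ℝ H p p) 1 :=
    hcomp.congr_of_eventuallyEq heq.symm
  have hlin : HasDerivAt (fun t : ℝ => t * H p) (H p) 1 := by
    simpa using (hasDerivAt_id (1:ℝ)).mul_const (H p)
  exact hcomp'.unique hlin


lemma inner_gradient {p : E} (hd : DifferentiableAt ℝ H p) (η : E) :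
    (inner ℝ (gradient H p) η : ℝ) = fderiv ℝ H p η := by
  have := hd.hasGradientAt.hasFDerivAt.fderiv
  rw [this]; simp [InnerProductSpace.toDual_apply_apply]
end auxD
noncomputable section
/-- For a `C²`, strictly convex norm `H` with polar `H°`, one has
`H°(ξ) ∇H(∇H°(ξ)) = ξ` and `H(ξ) ∇H°(∇H(ξ)) = ξ` for every `ξ ≠ 0`. -/
theorem gradient_polar_inversion {n : ℕ}
    (H : EuclideanSpace ℝ (Fin n) → ℝ) (hH : IsAnisoNorm H)
    (hC2 : ContDiffOn ℝ 2 H ({0} : Set (EuclideanSpace ℝ (Fin n)))ᶜ)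
    (hconv : StrictConvex ℝ {ξ : EuclideanSpace ℝ (Fin n) | H ξ ≤ 1}) :
    ∀ ξ : EuclideanSpace ℝ (Fin n), ξ ≠ 0 →
      polar H ξ • gradient H (gradient (polar H) ξ) = ξ ∧
      H ξ • gradient (polar H) (gradient H ξ) = ξ := by
  obtain ⟨hpos, hhom, hsub⟩ := hH
  have hpol_eq : polar H = pol H := rfl
  intro ξ hξ
  haveI : Nontrivial (EuclideanSpace ℝ (Fin n)) := nontrivial_of_ne ξ 0 hξ
  have hHξ : 0 < H ξ := hpos ξ hξ
  -- differentiability of H away from 0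
  have hd : ∀ p : EuclideanSpace ℝ (Fin n), p ≠ 0 → DifferentiableAt ℝ H p := fun p hp =>
    (hC2.contDiffAt ((isOpen_compl_singleton).mem_nhds hp)).differentiableAt (by norm_num)
  -- gradient of H is a subgradient
  have hsubgrad : ∀ p : EuclideanSpace ℝ (Fin n), p ≠ 0 → ∀ η,
      (inner ℝ (gradient H p) η : ℝ) ≤ H η := fun p hp η => by
    rw [inner_gradient (hd p hp)]
    exact fderiv_le hhom hsub (hd p hp) η
  have heuler : ∀ p : EuclideanSpace ℝ (Fin n), p ≠ 0 →
      (inner ℝ (gradient H p) p : ℝ) = H p := fun p hp => by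
    rw [inner_gradient (hd p hp)]
    exact euler hhom hp (hd p hp)
  constructor
  · -- first identity
    rw [hpol_eq]
    have hPpos : 0 < pol H ξ := pol_pos hpos hhom hsub hξ
    obtain ⟨hp1, hp2, hξub⟩ := pol_spec hpos hhom hsub ξ
    have hgradpol : gradient (pol H) ξ = maxPt H ξ :=
      (pol_hasGradientAt hpos hhom hsub hconv hξ).gradient
    set p := maxPt H ξ with hp
    have hp0 : p ≠ 0 := by
      intro h; rw [h, H_zero' hhom] at hp1; norm_num at hp1
    set v := (pol H ξ)⁻¹ • ξ with hv
    have hvsub : ∀ z, (inner ℝ v z : ℝ) ≤ H z := by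
      intro z
      rw [hv, real_inner_smul_left]
      have := hξub z
      rw [inv_mul_le_iff₀ hPpos]
      linarith
    have hvp : (inner ℝ v p : ℝ) = H p := by
      rw [hv, real_inner_smul_left, ← hp2, inv_mul_cancel₀ hPpos.ne', hp1]
    have hgrad : gradient H p = v :=
      gradient_eq_of_subgradient (hd p hp0) hvsub hvp
    rw [hgradpol, hgrad, hv, smul_smul, mul_inv_cancel₀ hPpos.ne', one_smul]
  · -- second identity
    rw [hpol_eq]
    set g := gradient H ξ with hg
    have hginner : (inner ℝ g ξ : ℝ) = H ξ := heuler ξ hξ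
    have hg0 : g ≠ 0 := by
      intro h
      rw [h] at hginner
      simp only [inner_zero_left] at hginner
      exact hHξ.ne hginner
    obtain ⟨hg1, hg2, hgub⟩ := pol_spec hpos hhom hsub g
    have hpolg : pol H g = 1 := by
      have hup : pol H g ≤ 1 := by
        rw [hg2]
        have := hsubgrad ξ hξ (maxPt H g)
        rw [← hg] at this
        rw [hg1] at this; exact this
      have hlow : 1 ≤ pol H g := by
        have := hgub ξ
        rw [hginner] at this
        nlinarith
      linarith
    have hgradpol : gradient (pol H) g = maxPt H g :=
      (pol_hasGradientAt hpos hhom hsub hconv hg0).gradient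
    have hmax : maxPt H g = (H ξ)⁻¹ • ξ := by
      refine max_unique hpos hhom hsub hconv hg0 hg1.le hg2.symm ?_ ?_
      · rw [hhom, abs_of_pos (inv_pos.2 hHξ), inv_mul_cancel₀ hHξ.ne']
      · rw [real_inner_smul_right, hginner, inv_mul_cancel₀ hHξ.ne', hpolg]
    rw [hgradpol, hmax, smul_smul, mul_inv_cancel₀ hHξ.ne', one_smul]
end
end

section
/- Let Ω ⊂ ℝ^n be a bounded measurable set and let u : Ω → [0, ∞) be measurable with distribution function μ(t) = |{u > t}| and decreasing rearrangement u*. Assume ∫_0^∞ μ(t)^{1 − 1/n} dt < ∞ and define 𝒦(τ) = ∫_τ^∞ μ(t)^{1 − 1/n} dt for τ ≥ 0. Then the function s ↦ 𝒦(u*(s)) is nondecreasing and right-continuous on (0, |Ω|), and its Lebesgue–Stieltjes measure on (0, |Ω|) equals the measure with density s^{1 − 1/n} with respect to the Lebesgue–Stieltjes measure of the nondecreasing right-continuous function s ↦ −u*(s); that is, D[𝒦(u*)](E) = ∫_E s^{1 − 1/n} d(−Du*)(s) for every Borel set E ⊂ (0, |Ω|). -/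
open MeasureTheory Set
open scoped ENNReal

noncomputable section

/-- The distribution function `μ(t) = μ {x ∈ A : |g x| > t}`. -/
def distFun {α : Type*} [MeasurableSpace α] (μ : Measure α) (A : Set α)
    (g : α → ℝ) (t : ℝ) : ℝ≥0∞ :=
  μ {x ∈ A | t < |g x|}

/-- The decreasing rearrangement `g*(s) = inf {t ≥ 0 : μ(t) ≤ s}`. -/
def decRe {α : Type*} [MeasurableSpace α] (μ : Measure α) (A : Set α)
    (g : α → ℝ) (s : ℝ) : ℝ :=
  sInf {t : ℝ | 0 ≤ t ∧ distFun μ A g t ≤ ENNReal.ofReal s}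

private lemma md_anti {α : Type*} [MeasurableSpace α] (μ : Measure α) (A : Set α) (g : α → ℝ) :
    Antitone (distFun μ A g) := fun s t hst =>
  measure_mono (fun x hx => ⟨hx.1, lt_of_le_of_lt hst hx.2⟩)

private lemma md_le {α : Type*} [MeasurableSpace α] (μ : Measure α) (A : Set α) (g : α → ℝ)
    (t : ℝ) : distFun μ A g t ≤ μ A :=
  measure_mono (fun x hx => hx.1)

private lemma md_sup {α : Type*} [MeasurableSpace α] (μ : Measure α) (A : Set α) (g : α → ℝ)
    (t : ℝ) : distFun μ A g t = ⨆ k : ℕ, distFun μ A g (t + 1/(k+1)) := by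
  have hmono : Monotone (fun k : ℕ => {x ∈ A | t + 1/(k+1) < |g x|}) := by
    intro k k' hk x hx
    refine ⟨hx.1, lt_of_le_of_lt ?_ hx.2⟩
    have h1 : (1:ℝ)/(k'+1) ≤ 1/(k+1) := by
      apply one_div_le_one_div_of_le (by positivity)
      exact_mod_cast Nat.add_le_add_right hk 1
    linarith
  have hset : {x ∈ A | t < |g x|} = ⋃ k : ℕ, {x ∈ A | t + 1/(k+1) < |g x|} := by
    ext x
    simp only [mem_setOf_eq, mem_iUnion]
    constructor
    · rintro ⟨hA, hlt⟩
      obtain ⟨k, hk⟩ := exists_nat_one_div_lt (sub_pos.2 hlt)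
      exact ⟨k, hA, by push_cast at hk ⊢; linarith⟩
    · rintro ⟨k, hA, h⟩
      have h0 : (0:ℝ) < 1/(k+1) := by positivity
      exact ⟨hA, by linarith⟩
  rw [distFun, hset, hmono.directed_le.measure_iUnion]
  rfl

private lemma md_nonempty {α : Type*} [MeasurableSpace α] (μ : Measure α) (A : Set α)
    (g : α → ℝ) {p : ℝ} (hp : 0 < p)
    (hfin : ∫⁻ t in Set.Ioi (0:ℝ), (distFun μ A g t) ^ p ≠ ∞)
    {s : ℝ} (hs : 0 < s) : ∃ t, 0 ≤ t ∧ distFun μ A g t ≤ ENNReal.ofReal s := by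
  by_contra hcon
  push_neg at hcon
  apply hfin
  have hb : ∀ t ∈ Set.Ioi (0:ℝ), (ENNReal.ofReal s) ^ p ≤ (distFun μ A g t) ^ p := by
    intro t ht
    exact ENNReal.rpow_le_rpow (hcon t (le_of_lt ht)).le hp.le
  have h1 : (ENNReal.ofReal s) ^ p * volume (Set.Ioi (0:ℝ))
      ≤ ∫⁻ t in Set.Ioi (0:ℝ), (distFun μ A g t) ^ p := by
    rw [← setLIntegral_const]
    exact setLIntegral_mono_ae ((md_anti μ A g).measurable.pow_const p).aemeasurable (ae_of_all _ hb)
  rw [Real.volume_Ioi, ENNReal.mul_top (by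
    exact (ENNReal.rpow_pos (ENNReal.ofReal_pos.2 hs) ENNReal.ofReal_ne_top).ne')] at h1
  exact top_le_iff.1 h1

private lemma key_iff {α : Type*} [MeasurableSpace α] (μ : Measure α) (A : Set α)
    (g : α → ℝ)
    (hne : ∀ s : ℝ, 0 < s → ∃ t, 0 ≤ t ∧ distFun μ A g t ≤ ENNReal.ofReal s)
    {s t : ℝ} (hs : 0 < s) (ht : 0 ≤ t) :
    distFun μ A g t ≤ ENNReal.ofReal s ↔ decRe μ A g s ≤ t := by
  set S := {t : ℝ | 0 ≤ t ∧ distFun μ A g t ≤ ENNReal.ofReal s} with hS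
  have hbdd : BddBelow S := ⟨0, fun x hx => hx.1⟩
  have hSne : S.Nonempty := hne s hs
  constructor
  · intro h
    exact csInf_le hbdd ⟨ht, h⟩
  · intro h
    have hinf : distFun μ A g (sInf S) ≤ ENNReal.ofReal s := by
      rw [md_sup]
      apply iSup_le
      intro k
      have hlt : sInf S < sInf S + 1/(k+1) := by
        have : (0:ℝ) < 1/(k+1) := by positivity
        linarith
      obtain ⟨t', ht'S, ht'⟩ := (csInf_lt_iff hbdd hSne).1 hlt
      exact le_trans (md_anti μ A g ht'.le) ht'S.2
    exact le_trans (md_anti μ A g h) hinf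

private lemma dr_nonneg {α : Type*} [MeasurableSpace α] (μ : Measure α) (A : Set α)
    (g : α → ℝ)
    (hne : ∀ s : ℝ, 0 < s → ∃ t, 0 ≤ t ∧ distFun μ A g t ≤ ENNReal.ofReal s)
    {s : ℝ} (hs : 0 < s) : 0 ≤ decRe μ A g s :=
  le_csInf (hne s hs) (fun x hx => hx.1)

private lemma dr_self {α : Type*} [MeasurableSpace α] (μ : Measure α) (A : Set α)
    (g : α → ℝ)
    (hne : ∀ s : ℝ, 0 < s → ∃ t, 0 ≤ t ∧ distFun μ A g t ≤ ENNReal.ofReal s)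
    {s : ℝ} (hs : 0 < s) : distFun μ A g (decRe μ A g s) ≤ ENNReal.ofReal s :=
  (key_iff μ A g hne hs (dr_nonneg μ A g hne hs)).2 le_rfl

private lemma dr_anti {α : Type*} [MeasurableSpace α] (μ : Measure α) (A : Set α)
    (g : α → ℝ)
    (hne : ∀ s : ℝ, 0 < s → ∃ t, 0 ≤ t ∧ distFun μ A g t ≤ ENNReal.ofReal s)
    {s s' : ℝ} (hs : 0 < s) (hss' : s ≤ s') : decRe μ A g s' ≤ decRe μ A g s := by
  have hs' : 0 < s' := lt_of_lt_of_le hs hss'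
  refine (key_iff μ A g hne hs' (dr_nonneg μ A g hne hs)).1 ?_
  exact le_trans (dr_self μ A g hne hs) (ENNReal.ofReal_le_ofReal hss')

private lemma dr_tendsto {α : Type*} [MeasurableSpace α] (μ : Measure α) (A : Set α)
    (g : α → ℝ)
    (hne : ∀ s : ℝ, 0 < s → ∃ t, 0 ≤ t ∧ distFun μ A g t ≤ ENNReal.ofReal s)
    (hfinA : μ A ≠ ∞) {s : ℝ} (hs : 0 < s) :
    Filter.Tendsto (decRe μ A g) (nhdsWithin s (Set.Ioi s)) (nhds (decRe μ A g s)) := by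
  rw [tendsto_order]
  constructor
  · intro l hl
    rcases lt_or_ge l 0 with hl0 | hl0
    · filter_upwards [self_mem_nhdsWithin] with s' hs'
      exact lt_of_lt_of_le hl0 (dr_nonneg μ A g hne (lt_trans hs hs'))
    · by_contra hcon
      rw [Filter.not_eventually] at hcon
      have hall : ∀ s' : ℝ, s < s' → decRe μ A g s' ≤ l := by
        intro s' hss'
        obtain ⟨s'', hs''1, hs''2⟩ :=
          (hcon.and_eventually (eventually_mem_nhdsWithin)).exists
        rcases lt_or_ge s'' s' with h | h
        · push_neg at hs''1
          exact le_trans (dr_anti μ A g hne (lt_trans hs hs''2) h.le) hs''1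
        · -- need s'' arbitrarily close; intersect with Ioo s s'
          obtain ⟨s₃, hs₃1, hs₃2⟩ :=
            (hcon.and_eventually (Ioo_mem_nhdsGT_of_mem (⟨le_refl s, hss'⟩ : s ∈ Set.Ico s s'))).exists
          push_neg at hs₃1
          exact le_trans (dr_anti μ A g hne (lt_trans hs hs₃2.1) hs₃2.2.le) hs₃1
      have hmd : ∀ s' : ℝ, s < s' → distFun μ A g l ≤ ENNReal.ofReal s' := by
        intro s' hss'
        exact (key_iff μ A g hne (lt_trans hs hss') hl0).2 (hall s' hss')
      have hmdne : distFun μ A g l ≠ ∞ := (lt_of_le_of_lt (md_le μ A g l) hfinA.lt_top).ne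
      have htR : (distFun μ A g l).toReal ≤ s := by
        apply le_of_forall_pos_le_add
        intro ε hε
        have := hmd (s + ε) (by linarith)
        exact (ENNReal.le_ofReal_iff_toReal_le hmdne (by linarith)).1 this
      have : distFun μ A g l ≤ ENNReal.ofReal s :=
        (ENNReal.le_ofReal_iff_toReal_le hmdne hs.le).2 htR
      exact absurd ((key_iff μ A g hne hs hl0).1 this) (not_le.2 hl)
  · intro u' hu'
    filter_upwards [self_mem_nhdsWithin] with s' hs'
    exact lt_of_le_of_lt (dr_anti μ A g hne hs (le_of_lt hs')) hu'

private def Hp (p : ℝ) (hp : 0 < p) : StieltjesFunction ℝ where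
  toFun := fun x => (max x 0) ^ p
  mono' := fun x y hxy =>
    Real.rpow_le_rpow (le_max_right x 0) (max_le_max hxy le_rfl) hp.le
  right_continuous' := fun x =>
    (((continuous_id.max continuous_const).rpow_const
      (fun _ => Or.inr hp.le)).continuousAt).continuousWithinAt

private lemma Hp_cont (p : ℝ) (hp : 0 < p) : Continuous (Hp p hp) :=
  (continuous_id.max continuous_const).rpow_const (fun _ => Or.inr hp.le)

private lemma Hp_measure_Ioo (p : ℝ) (hp : 0 < p) {T : ℝ} (hT : 0 ≤ T) :
    (Hp p hp).measure (Set.Ioo 0 T) = ENNReal.ofReal (T ^ p) := by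
  rw [StieltjesFunction.measure_Ioo]
  have h0 : Hp p hp 0 = 0 := by
    show (max (0:ℝ) 0) ^ p = 0
    simp [Real.zero_rpow hp.ne']
  have hll : Function.leftLim (Hp p hp) T = Hp p hp T :=
    leftLim_eq_of_tendsto (h := nhdsLT_neBot T)
      (((Hp_cont p hp).tendsto T).mono_left nhdsWithin_le_nhds)
  rw [hll, h0, sub_zero]
  show ENNReal.ofReal ((max T 0) ^ p) = _
  rw [max_eq_left hT]

private lemma Hp_eval (p : ℝ) (hp : 0 < p) {x : ℝ≥0∞} (hx : x ≠ ∞) :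
    (Hp p hp).measure (Set.Ioo 0 x.toReal) = x ^ p := by
  rw [Hp_measure_Ioo p hp ENNReal.toReal_nonneg, ENNReal.toReal_rpow,
    ENNReal.ofReal_toReal (ENNReal.rpow_ne_top_of_nonneg hp.le hx)]

private lemma lint_if {m : Measure ℝ} {B C : Set ℝ} (hC : MeasurableSet C) :
    ∫⁻ z in B, C.indicator 1 z ∂m = m (C ∩ B) := by
  rw [lintegral_indicator_one hC, Measure.restrict_apply hC]

private lemma vol_Ioc_Iio (c d e : ℝ) :
    volume (Set.Ioc c d ∩ Set.Iio e) = ENNReal.ofReal (min d e - c) := by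
  rcases le_or_gt e d with h | h
  · have : Set.Ioc c d ∩ Set.Iio e = Set.Ioo c e := by
      ext z
      simp only [Set.mem_inter_iff, Set.mem_Ioc, Set.mem_Iio, Set.mem_Ioo]
      exact ⟨fun hz => ⟨hz.1.1, hz.2⟩, fun hz => ⟨⟨hz.1, le_trans hz.2.le h⟩, hz.2⟩⟩
    rw [this, Real.volume_Ioo, min_eq_right h]
  · have : Set.Ioc c d ∩ Set.Iio e = Set.Ioc c d := by
      apply Set.inter_eq_self_of_subset_left
      intro z hz
      exact lt_of_le_of_lt hz.2 h
    rw [this, Real.volume_Ioc, min_eq_left h.le]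

private lemma core_Ioc {α : Type*} [MeasurableSpace α] (μ : Measure α) (A : Set α) (g : α → ℝ)
    {p : ℝ} (hp : 0 < p)
    (hne : ∀ s : ℝ, 0 < s → ∃ t, 0 ≤ t ∧ distFun μ A g t ≤ ENNReal.ofReal s)
    (hfinA : μ A ≠ ∞)
    (F : StieltjesFunction ℝ) (hF : ∀ s : ℝ, F s = - decRe μ A g s)
    {x y : ℝ} (hx : 0 < x) (hxy : x ≤ y) :
    ∫⁻ t in Set.Ioc (decRe μ A g y) (decRe μ A g x), (distFun μ A g t) ^ p
      = ∫⁻ s in Set.Ioc x y, ENNReal.ofReal (s ^ p) ∂F.measure := by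
  set md := distFun μ A g with hmd
  set dr := decRe μ A g with hdr
  have hy : 0 < y := lt_of_lt_of_le hx hxy
  set c := dr y with hc
  set d := dr x with hd
  have hc0 : 0 ≤ c := dr_nonneg μ A g hne hy
  have hmdne : ∀ t, md t ≠ ∞ := fun t => (lt_of_le_of_lt (md_le μ A g t) hfinA.lt_top).ne
  have hmdmeas : Measurable md := (md_anti μ A g).measurable
  set σm := (Hp p hp).measure with hσm
  -- the two kernels
  set f : ℝ → ℝ → ℝ≥0∞ := fun t r => ({r' : ℝ | ENNReal.ofReal r' < md t}).indicator 1 r with hf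
  set f' : ℝ → ℝ → ℝ≥0∞ := fun s r => (Set.Iio s).indicator 1 r with hf'
  have hfmeas : AEMeasurable (Function.uncurry f)
      ((volume.restrict (Set.Ioc c d)).prod (σm.restrict (Set.Ioi 0))) := by
    have hS : MeasurableSet {q : ℝ × ℝ | ENNReal.ofReal q.2 < md q.1} :=
      measurableSet_lt (ENNReal.measurable_ofReal.comp measurable_snd)
        (hmdmeas.comp measurable_fst)
    have : Function.uncurry f
        = ({q : ℝ × ℝ | ENNReal.ofReal q.2 < md q.1}).indicator 1 := by
      funext q
      by_cases h : ENNReal.ofReal q.2 < md q.1 <;>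
        simp [Function.uncurry, hf, Set.indicator_apply, h]
    rw [this]
    exact (measurable_one.indicator hS).aemeasurable
  have hf'meas : AEMeasurable (Function.uncurry f')
      ((F.measure.restrict (Set.Ioc x y)).prod (σm.restrict (Set.Ioi 0))) := by
    have hS : MeasurableSet {q : ℝ × ℝ | q.2 < q.1} :=
      measurableSet_lt measurable_snd measurable_fst
    have : Function.uncurry f' = ({q : ℝ × ℝ | q.2 < q.1}).indicator 1 := by
      funext q
      by_cases h : q.2 < q.1 <;>
        simp [Function.uncurry, hf', Set.indicator_apply, h]
    rw [this]
    exact (measurable_one.indicator hS).aemeasurable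
  -- LHS to double integral
  have step1 : ∫⁻ t in Set.Ioc c d, (md t) ^ p
      = ∫⁻ t in Set.Ioc c d, ∫⁻ r in Set.Ioi 0, f t r ∂σm := by
    apply setLIntegral_congr_fun_ae measurableSet_Ioc
    apply ae_of_all
    intro t ht
    have hCm : MeasurableSet {r : ℝ | ENNReal.ofReal r < md t} :=
      measurableSet_lt ENNReal.measurable_ofReal measurable_const
    rw [hf]
    rw [lint_if hCm]
    have hset : {r : ℝ | ENNReal.ofReal r < md t} ∩ Set.Ioi 0 = Set.Ioo 0 (md t).toReal := by
      ext r
      simp only [Set.mem_inter_iff, Set.mem_setOf_eq, Set.mem_Ioi, Set.mem_Ioo]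
      constructor
      · rintro ⟨h1, h2⟩
        exact ⟨h2, (ENNReal.ofReal_lt_iff_lt_toReal h2.le (hmdne t)).1 h1⟩
      · rintro ⟨h1, h2⟩
        exact ⟨(ENNReal.ofReal_lt_iff_lt_toReal h1.le (hmdne t)).2 h2, h1⟩
    rw [hset, Hp_eval p hp (hmdne t)]
  -- pointwise identification after swap, LHS
  have step2 : ∫⁻ r in Set.Ioi 0, ∫⁻ t in Set.Ioc c d, f t r ∂volume ∂σm
      = ∫⁻ r in Set.Ioi 0, F.measure (Set.Ioc (max x r) y) ∂σm := by
    apply setLIntegral_congr_fun_ae measurableSet_Ioi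
    apply ae_of_all
    intro r hr
    have hr0 : (0:ℝ) < r := hr
    have hCm : MeasurableSet {t : ℝ | ENNReal.ofReal r < md t} :=
      measurableSet_lt measurable_const hmdmeas
    have hconv : ∀ t, f t r = ({t' : ℝ | ENNReal.ofReal r < md t'}).indicator 1 t := by
      intro t
      by_cases h : ENNReal.ofReal r < md t <;>
        simp [hf, Set.indicator_apply, h]
    rw [lintegral_congr hconv, lint_if hCm]
    have hset : {t : ℝ | ENNReal.ofReal r < md t} ∩ Set.Ioc c d
        = Set.Ioc c d ∩ Set.Iio (dr r) := by
      ext t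
      simp only [Set.mem_inter_iff, Set.mem_setOf_eq, Set.mem_Ioc, Set.mem_Iio]
      constructor
      · rintro ⟨h1, h2⟩
        refine ⟨h2, ?_⟩
        by_contra hcon
        push_neg at hcon
        exact absurd ((key_iff μ A g hne hr0 (le_trans hc0 h2.1.le)).2 hcon) (not_le.2 h1)
      · rintro ⟨h2, h1⟩
        refine ⟨?_, h2⟩
        by_contra hcon
        push_neg at hcon
        exact absurd ((key_iff μ A g hne hr0 (le_trans hc0 h2.1.le)).1 hcon) (not_le.2 h1)
    rw [hset, vol_Ioc_Iio]
    have hFm : F.measure (Set.Ioc (max x r) y) = ENNReal.ofReal (dr (max x r) - c) := by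
      rw [StieltjesFunction.measure_Ioc, hF, hF]
      rw [hc]; ring_nf
    rw [hFm]
    congr 1
    rcases le_or_gt r x with h | h
    · rw [max_eq_left h, min_eq_left]
      exact dr_anti μ A g hne hr0 h
    · rw [max_eq_right h.le, min_eq_right]
      exact dr_anti μ A g hne hx h.le
  -- RHS to double integral
  have step3 : ∫⁻ s in Set.Ioc x y, ENNReal.ofReal (s ^ p) ∂F.measure
      = ∫⁻ s in Set.Ioc x y, ∫⁻ r in Set.Ioi 0, f' s r ∂σm ∂F.measure := by
    apply setLIntegral_congr_fun_ae measurableSet_Ioc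
    apply ae_of_all
    intro s hs
    have hs0 : 0 < s := lt_trans hx hs.1
    have hCm : MeasurableSet (Set.Iio s) := measurableSet_Iio
    rw [hf', lint_if hCm]
    have hset : Set.Iio s ∩ Set.Ioi 0 = Set.Ioo 0 s := by
      ext r
      simp only [Set.mem_inter_iff, Set.mem_setOf_eq, Set.mem_Ioi, Set.mem_Ioo]
      tauto
    rw [hset, Hp_measure_Ioo p hp hs0.le]
  -- pointwise identification after swap, RHS
  have step4 : ∫⁻ r in Set.Ioi 0, ∫⁻ s in Set.Ioc x y, f' s r ∂F.measure ∂σm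
      = ∫⁻ r in Set.Ioi 0, F.measure (Set.Ioc (max x r) y) ∂σm := by
    apply setLIntegral_congr_fun_ae measurableSet_Ioi
    apply ae_of_all
    intro r hr
    have hCm : MeasurableSet (Set.Ioi r) := measurableSet_Ioi
    have hconv : ∀ s, f' s r = (Set.Ioi r).indicator 1 s := by
      intro s
      by_cases h : r < s <;> simp [hf', Set.indicator_apply, h]
    rw [lintegral_congr hconv, lint_if hCm]
    congr 1
    ext s
    simp only [Set.mem_inter_iff, Set.mem_setOf_eq, Set.mem_Ioc, max_lt_iff]
    tauto
  rw [step1, lintegral_lintegral_swap hfmeas, step2, step3,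
    lintegral_lintegral_swap hf'meas, step4]

/-- **Chain rule for `𝒦(u*)`:** with `𝒦(τ) = ∫_τ^∞ μ(t)^{1-1/n} dt`, the map
`s ↦ 𝒦(u*(s))` is nondecreasing and right-continuous on `(0, |Ω|)`, and its
Lebesgue–Stieltjes measure equals `s^{1-1/n} d(-Du*)(s)` there. The Stieltjes
functions `F` and `G` represent `-u*` and `𝒦(u*)` respectively. -/
theorem stieltjes_chain_rule_K {n : ℕ} (hn : 0 < n)
    (Ω : Set (EuclideanSpace ℝ (Fin n))) (hΩmeas : MeasurableSet Ω)
    (hΩbdd : Bornology.IsBounded Ω)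
    (u : EuclideanSpace ℝ (Fin n) → ℝ) (humeas : Measurable u)
    (hu0 : ∀ x ∈ Ω, 0 ≤ u x)
    (hfin : ∫⁻ t in Set.Ioi (0 : ℝ), (distFun volume Ω u t) ^ (1 - 1 / (n : ℝ)) ≠ ∞)
    (K : ℝ → ℝ)
    (hK : ∀ τ : ℝ, K τ =
      (∫⁻ t in Set.Ioi τ, (distFun volume Ω u t) ^ (1 - 1 / (n : ℝ))).toReal)
    (F G : StieltjesFunction ℝ)
    (hF : ∀ s : ℝ, F s = - decRe volume Ω u s)
    (hG : ∀ s ∈ Set.Ioo (0 : ℝ) (volume Ω).toReal, G s = K (decRe volume Ω u s)) :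
    MonotoneOn (fun s => K (decRe volume Ω u s)) (Set.Ioo 0 (volume Ω).toReal) ∧
    (∀ s ∈ Set.Ioo (0 : ℝ) (volume Ω).toReal,
      ContinuousWithinAt (fun s => K (decRe volume Ω u s)) (Set.Ici s) s) ∧
    (∀ E ⊆ Set.Ioo (0 : ℝ) (volume Ω).toReal, MeasurableSet E →
      G.measure E = ∫⁻ s in E, ENNReal.ofReal (s ^ (1 - 1 / (n : ℝ))) ∂F.measure) := by
  rcases lt_or_ge n 2 with h2 | h2
  · -- n = 1 : the finiteness assumption is contradictory
    exfalso
    have hn1 : n = 1 := by omega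
    apply hfin
    have he : (1 : ℝ) - 1/(n:ℝ) = 0 := by rw [hn1]; norm_num
    simp only [he, ENNReal.rpow_zero]
    rw [setLIntegral_const, one_mul, Real.volume_Ioi]
  -- main case : n ≥ 2
  set p := (1:ℝ) - 1/(n:ℝ) with hpdef
  have hp : 0 < p := by
    have h2' : (2:ℝ) ≤ (n:ℝ) := by exact_mod_cast h2
    have h1n : 1/(n:ℝ) < 1 := by
      rw [div_lt_one (by linarith)]; linarith
    simp only [hpdef]; linarith
  have hΩfin : volume Ω ≠ ∞ := hΩbdd.measure_lt_top.ne
  set md := distFun volume Ω u with hmddef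
  set dr := decRe volume Ω u with hdrdef
  set M := (volume Ω).toReal with hMdef
  have hne : ∀ s : ℝ, 0 < s → ∃ t, 0 ≤ t ∧ md t ≤ ENNReal.ofReal s :=
    fun s hs => md_nonempty volume Ω u hp hfin hs
  set I : ℝ → ℝ≥0∞ := fun τ => ∫⁻ t in Set.Ioi τ, md t ^ p with hIdef
  set C := (volume Ω) ^ p with hCdef
  have hCfin : C ≠ ∞ := ENNReal.rpow_ne_top_of_nonneg hp.le hΩfin
  have hbound : ∀ t, md t ^ p ≤ C := fun t =>
    ENNReal.rpow_le_rpow (md_le volume Ω u t) hp.le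
  have hIoc : ∀ x y : ℝ, (∫⁻ t in Set.Ioc x y, md t ^ p) ≤ C * ENNReal.ofReal (y - x) := by
    intro x y
    calc (∫⁻ t in Set.Ioc x y, md t ^ p) ≤ ∫⁻ _ in Set.Ioc x y, C :=
          lintegral_mono (fun t => hbound t)
      _ = C * volume (Set.Ioc x y) := setLIntegral_const _ _
      _ = C * ENNReal.ofReal (y - x) := by rw [Real.volume_Ioc]
  have hIocfin : ∀ x y : ℝ, (∫⁻ t in Set.Ioc x y, md t ^ p) ≠ ∞ := fun x y =>
    (lt_of_le_of_lt (hIoc x y) (ENNReal.mul_lt_top hCfin.lt_top ENNReal.ofReal_lt_top)).ne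
  have hsplit : ∀ {x y : ℝ}, x ≤ y →
      I x = (∫⁻ t in Set.Ioc x y, md t ^ p) + I y := by
    intro x y hxy
    simp only [hIdef]
    rw [← Set.Ioc_union_Ioi_eq_Ioi hxy,
      lintegral_union measurableSet_Ioi (Set.Ioc_disjoint_Ioi le_rfl)]
  have hIfin : ∀ τ, I τ ≠ ∞ := by
    intro τ
    rcases le_or_gt 0 τ with h | h
    · exact (lt_of_le_of_lt (lintegral_mono_set (Set.Ioi_subset_Ioi h)) hfin.lt_top).ne
    · rw [hsplit h.le]
      exact ENNReal.add_ne_top.2 ⟨hIocfin τ 0, hfin⟩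
  have hKanti : Antitone K := by
    intro x y hxy
    rw [hK, hK]
    refine (ENNReal.toReal_le_toReal (hIfin y) (hIfin x)).2 ?_
    exact le_trans (self_le_add_left _ _) (hsplit hxy).ge
  have hKdiff : ∀ {x y : ℝ}, x ≤ y →
      ENNReal.ofReal (K x - K y) = ∫⁻ t in Set.Ioc x y, md t ^ p := by
    intro x y hxy
    rw [hK, hK]
    change ENNReal.ofReal ((I x).toReal - (I y).toReal) = _
    rw [hsplit hxy, ENNReal.toReal_add (hIocfin x y) (hIfin y), add_sub_cancel_right]
    exact ENNReal.ofReal_toReal (hIocfin x y)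
  have hKcont : Continuous K := by
    refine (LipschitzWith.of_dist_le_mul (K := C.toNNReal) (f := K) ?_).continuous
    intro x y
    have key : ∀ x y : ℝ, x ≤ y → dist (K x) (K y) ≤ C.toReal * dist x y := by
      intro x y hxy
      have h1 : K y ≤ K x := hKanti hxy
      have h2 : ENNReal.ofReal (K x - K y) ≤ C * ENNReal.ofReal (y - x) :=
        (hKdiff hxy).le.trans (hIoc x y)
      have h3 : K x - K y ≤ C.toReal * (y - x) := by
        have := ENNReal.toReal_mono (ENNReal.mul_ne_top hCfin ENNReal.ofReal_ne_top) h2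
        rw [ENNReal.toReal_ofReal (by linarith), ENNReal.toReal_mul,
          ENNReal.toReal_ofReal (by linarith)] at this
        exact this
      rw [Real.dist_eq, Real.dist_eq, abs_of_nonneg (by linarith : 0 ≤ K x - K y),
        abs_of_nonpos (by linarith : x - y ≤ 0)]
      simpa using h3
    rcases le_total x y with h | h
    · exact key x y h
    · rw [dist_comm (K x), dist_comm x]
      exact key y x h
  refine ⟨?_, ?_, ?_⟩
  · -- monotone
    intro s hs s' hs' hss'
    exact hKanti (dr_anti volume Ω u hne hs.1 hss')
  · -- right continuity
    intro s hs
    have h1 : ContinuousWithinAt dr (Set.Ici s) s := by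
      rw [← continuousWithinAt_Ioi_iff_Ici]
      exact dr_tendsto volume Ω u hne hΩfin hs.1
    exact hKcont.continuousAt.comp_continuousWithinAt h1
  · -- the measure identity
    intro E hE hEmeas
    rcases le_or_gt M 0 with hM0 | hM0
    · have hempty : Set.Ioo (0:ℝ) M = ∅ := Set.Ioo_eq_empty (not_lt.2 hM0)
      rw [hempty, Set.subset_empty_iff] at hE
      rw [hE]
      simp
    set ν := F.measure.withDensity (fun s => ENNReal.ofReal (s ^ p)) with hν
    have hcore : ∀ x y : ℝ, 0 < x → y < M → G.measure (Set.Ioc x y) = ν (Set.Ioc x y) := by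
      intro x y hx hyM
      rcases le_or_gt y x with h | h
      · rw [Set.Ioc_eq_empty (not_lt.2 h)]; simp
      · have hxo : x ∈ Set.Ioo (0:ℝ) M := ⟨hx, lt_trans h hyM⟩
        have hyo : y ∈ Set.Ioo (0:ℝ) M := ⟨lt_trans hx h, hyM⟩
        rw [StieltjesFunction.measure_Ioc, hG x hxo, hG y hyo,
          hν, withDensity_apply _ measurableSet_Ioc]
        have hdrle : dr y ≤ dr x := dr_anti volume Ω u hne hx h.le
        rw [hKdiff hdrle]
        exact core_Ioc volume Ω u hp hne hΩfin F hF hx h.le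
    have hGν : G.measure.restrict (Set.Ioo 0 M) = ν.restrict (Set.Ioo 0 M) := by
      refine Measure.ext_of_Ioc' _ _ (fun a b hab => ?_) (fun a b hab => ?_)
      · rw [Measure.restrict_apply measurableSet_Ioc]
        refine (lt_of_le_of_lt (measure_mono Set.inter_subset_left) ?_).ne
        rw [StieltjesFunction.measure_Ioc]
        exact ENNReal.ofReal_lt_top
      · rw [Measure.restrict_apply measurableSet_Ioc, Measure.restrict_apply measurableSet_Ioc]
        set A : ℕ → Set ℝ := fun k =>
          Set.Ioc (max a (1/(k+1))) (min b (M - M/(k+2))) with hA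
        have hAmono : Monotone A := by
          intro k k' hk
          apply Set.Ioc_subset_Ioc
          · apply max_le_max le_rfl
            apply one_div_le_one_div_of_le (by positivity)
            have : (k:ℝ) ≤ (k':ℝ) := Nat.cast_le.2 hk
            linarith
          · apply min_le_min le_rfl
            have h1 : M/((k':ℝ)+2) ≤ M/((k:ℝ)+2) := by
              apply div_le_div_of_nonneg_left hM0.le (by positivity)
              have : (k:ℝ) ≤ (k':ℝ) := Nat.cast_le.2 hk
              linarith
            linarith
        have hAunion : Set.Ioc a b ∩ Set.Ioo 0 M = ⋃ k, A k := by
          ext z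
          simp only [Set.mem_inter_iff, Set.mem_Ioc, Set.mem_Ioo, Set.mem_iUnion, hA,
            max_lt_iff, le_min_iff]
          constructor
          · rintro ⟨⟨haz, hzb⟩, hz0, hzM⟩
            obtain ⟨k1, hk1⟩ := exists_nat_one_div_lt hz0
            obtain ⟨k2, hk2⟩ := exists_nat_one_div_lt (div_pos (sub_pos.2 hzM) hM0)
            refine ⟨max k1 k2, ⟨haz, ?_⟩, hzb, ?_⟩
            · refine lt_of_le_of_lt ?_ hk1
              apply one_div_le_one_div_of_le (by positivity)
              have : (k1:ℝ) ≤ ((max k1 k2 : ℕ):ℝ) := Nat.cast_le.2 (le_max_left _ _)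
              linarith
            · have hle : (1:ℝ)/((max k1 k2 : ℕ) + 2) ≤ 1/((k2:ℝ)+1) := by
                apply one_div_le_one_div_of_le (by positivity)
                have : (k2:ℝ) ≤ ((max k1 k2 : ℕ):ℝ) := Nat.cast_le.2 (le_max_right _ _)
                linarith
              have h5 : M/(((max k1 k2 : ℕ):ℝ) + 2) < M - z := by
                have h6 : (1:ℝ)/(((max k1 k2 : ℕ):ℝ)+2) < (M-z)/M :=
                  lt_of_le_of_lt hle hk2
                rw [div_lt_div_iff₀ (by positivity) hM0] at h6
                rw [div_lt_iff₀ (by positivity)]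
                linarith
              linarith
          · rintro ⟨k, ⟨h1, h2⟩, h3, h4⟩
            have hk0 : (0:ℝ) < 1/((k:ℝ)+1) := by positivity
            have hkM : M/((k:ℝ)+2) > 0 := by positivity
            exact ⟨⟨h1, h3⟩, lt_trans hk0 h2, by linarith⟩
        rw [hAunion, hAmono.directed_le.measure_iUnion,
          hAmono.directed_le.measure_iUnion]
        refine iSup_congr (fun k => ?_)
        apply hcore
        · exact lt_of_lt_of_le (by positivity : (0:ℝ) < 1/((k:ℝ)+1)) (le_max_right _ _)
        · refine lt_of_le_of_lt (min_le_right _ _) ?_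
          have : M/((k:ℝ)+2) > 0 := by positivity
          linarith
    calc G.measure E = (G.measure.restrict (Set.Ioo 0 M)) E := by
          rw [Measure.restrict_apply hEmeas, Set.inter_eq_self_of_subset_left hE]
      _ = (ν.restrict (Set.Ioo 0 M)) E := by rw [hGν]
      _ = ν E := by rw [Measure.restrict_apply hEmeas, Set.inter_eq_self_of_subset_left hE]
      _ = ∫⁻ s in E, ENNReal.ofReal (s ^ p) ∂F.measure := withDensity_apply _ hEmeas

end
end

section
/- Let H : ℝ^n → ℝ be a norm with polar norm H°. Let M > 0, R = (M / κ_n)^{1/n}, let g_* : [0, M] → [0, ∞) be nondecreasing and integrable, and let c₀ ≥ 0. Define u⋆(x) = ∫_{κ_n (H°(x))^n}^{M} g_*(t) / (n κ_n^{1/n} t^{1 − 1/n}) dt + c₀ for x ∈ 𝒲_R. Then ∫_{𝒲_R} u⋆(x) dx = (1 / (n κ_n^{1/n})) ∫_0^{M} t^{1/n} g_*(t) dt + c₀ M. -/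
open MeasureTheory Set
open scoped ENNReal Pointwise

set_option linter.unusedSectionVars false

noncomputable section

/-- The Wulff ball `𝒲_R = {x : H°(x) < R}`. -/
def wulff {n : ℕ} (H : EuclideanSpace ℝ (Fin n) → ℝ) (R : ℝ) :
    Set (EuclideanSpace ℝ (Fin n)) :=
  {x | polar H x < R}

variable {n : ℕ} {H : EuclideanSpace ℝ (Fin n) → ℝ}

lemma aniso_zero (hH : IsAnisoNorm H) : H 0 = 0 := by
  have := hH.2.1 0 0
  simpa using this

lemma aniso_nonneg (hH : IsAnisoNorm H) (ξ : EuclideanSpace ℝ (Fin n)) : 0 ≤ H ξ := by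
  rcases eq_or_ne ξ 0 with rfl | h
  · simp [aniso_zero hH]
  · exact (hH.1 ξ h).le

lemma aniso_neg (hH : IsAnisoNorm H) (ξ : EuclideanSpace ℝ (Fin n)) : H (-ξ) = H ξ := by
  have := hH.2.1 (-1) ξ
  simpa using this

lemma aniso_upper (hH : IsAnisoNorm H) :
    ∃ b > 0, ∀ ξ : EuclideanSpace ℝ (Fin n), H ξ ≤ b * ‖ξ‖ := by
  have hsum : 0 ≤ ∑ i : Fin n, H (EuclideanSpace.single i (1:ℝ)) :=
    Finset.sum_nonneg fun i _ => aniso_nonneg hH _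
  refine ⟨(∑ i : Fin n, H (EuclideanSpace.single i 1)) + 1, by linarith, fun ξ => ?_⟩
  have hrepr : ξ = ∑ i : Fin n, ξ i • EuclideanSpace.single i (1:ℝ) := by
    ext j
    rw [show (∑ i : Fin n, ξ i • EuclideanSpace.single i (1:ℝ)) j
        = ∑ i : Fin n, (ξ i • EuclideanSpace.single i (1:ℝ)) j from
      by rw [WithLp.ofLp_sum, Finset.sum_apply]]
    simp [EuclideanSpace.single_apply]
  calc H ξ = H (∑ i : Fin n, ξ i • EuclideanSpace.single i (1:ℝ)) := by rw [← hrepr]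
    _ ≤ ∑ i : Fin n, H (ξ i • EuclideanSpace.single i (1:ℝ)) :=
        Finset.le_sum_of_subadditive H (aniso_zero hH).le hH.2.2 _ _
    _ = ∑ i : Fin n, |ξ i| * H (EuclideanSpace.single i (1:ℝ)) := by
        simp [hH.2.1]
    _ ≤ ∑ i : Fin n, ‖ξ‖ * H (EuclideanSpace.single i (1:ℝ)) := by
        refine Finset.sum_le_sum fun i _ => ?_
        have h1 : |ξ i| ≤ ‖ξ‖ := by
          have := EuclideanSpace.norm_eq ξ
          calc |ξ i| = Real.sqrt (|ξ i| ^ 2) := by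
                rw [Real.sqrt_sq (abs_nonneg _)]
            _ ≤ ‖ξ‖ := by
                rw [this]
                apply Real.sqrt_le_sqrt
                exact Finset.single_le_sum (f := fun j => |ξ j| ^ 2)
                  (fun j _ => sq_nonneg _) (Finset.mem_univ i)
        exact mul_le_mul_of_nonneg_right h1 (aniso_nonneg hH _)
    _ = (∑ i : Fin n, H (EuclideanSpace.single i (1:ℝ))) * ‖ξ‖ := by
        rw [← Finset.mul_sum, mul_comm]
    _ ≤ ((∑ i : Fin n, H (EuclideanSpace.single i (1:ℝ))) + 1) * ‖ξ‖ := by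
        apply mul_le_mul_of_nonneg_right _ (norm_nonneg _)
        linarith

lemma aniso_continuous (hH : IsAnisoNorm H) : Continuous H := by
  obtain ⟨b, hb0, hb⟩ := aniso_upper hH
  have key : ∀ ξ η : EuclideanSpace ℝ (Fin n), H ξ - H η ≤ b * ‖ξ - η‖ := by
    intro ξ η
    have := hH.2.2 (ξ - η) η
    simp only [sub_add_cancel] at this
    have := hb (ξ - η)
    linarith [hH.2.2 (ξ - η) η, hb (ξ - η)]
  have : LipschitzWith (Real.toNNReal b) H := by
    apply LipschitzWith.of_dist_le_mul
    intro ξ η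
    rw [Real.dist_eq, Real.coe_toNNReal _ hb0.le, dist_eq_norm]
    rw [abs_sub_le_iff]
    constructor
    · exact key ξ η
    · rw [← norm_neg, neg_sub]; exact key η ξ
  exact this.continuous

lemma aniso_lower (hn : 0 < n) (hH : IsAnisoNorm H) :
    ∃ a > 0, ∀ ξ : EuclideanSpace ℝ (Fin n), a * ‖ξ‖ ≤ H ξ := by
  have hne : (Metric.sphere (0 : EuclideanSpace ℝ (Fin n)) 1).Nonempty := by
    refine ⟨EuclideanSpace.single ⟨0, hn⟩ (1:ℝ), ?_⟩
    simp [EuclideanSpace.norm_single]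
  obtain ⟨z, hz, hzmin⟩ := (isCompact_sphere (0 : EuclideanSpace ℝ (Fin n)) 1).exists_isMinOn
    hne (aniso_continuous hH).continuousOn
  have hz1 : ‖z‖ = 1 := by simpa using hz
  have hzne : z ≠ 0 := by intro h; rw [h] at hz1; simp at hz1
  refine ⟨H z, hH.1 z hzne, fun ξ => ?_⟩
  rcases eq_or_ne ξ 0 with rfl | hξ
  · simp [aniso_zero hH]
  · have hnorm : ‖ξ‖ ≠ 0 := norm_ne_zero_iff.2 hξ
    have hmem : ‖ξ‖⁻¹ • ξ ∈ Metric.sphere (0 : EuclideanSpace ℝ (Fin n)) 1 := by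
      simp [norm_smul, abs_of_nonneg (inv_nonneg.2 (norm_nonneg ξ)), inv_mul_cancel₀ hnorm]
    have h3 : H z ≤ H (‖ξ‖⁻¹ • ξ) := hzmin hmem
    have h2 : H (‖ξ‖⁻¹ • ξ) = ‖ξ‖⁻¹ * H ξ := by
      rw [hH.2.1]; congr 1; exact abs_of_nonneg (inv_nonneg.2 (norm_nonneg ξ))
    rw [h2] at h3
    have hpos : (0:ℝ) < ‖ξ‖ := norm_pos_iff.2 hξ
    calc H z * ‖ξ‖ ≤ (‖ξ‖⁻¹ * H ξ) * ‖ξ‖ := by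
          exact mul_le_mul_of_nonneg_right h3 (norm_nonneg ξ)
      _ = H ξ := by field_simp

section Polar

variable (hn : 0 < n) (hH : IsAnisoNorm H)
variable {a : ℝ} (ha0 : 0 < a) (ha : ∀ ξ : EuclideanSpace ℝ (Fin n), a * ‖ξ‖ ≤ H ξ)

lemma nonempty_ne_zero (hn : 0 < n) :
    Nonempty {ξ : EuclideanSpace ℝ (Fin n) // ξ ≠ 0} := by
  refine ⟨⟨EuclideanSpace.single ⟨0, hn⟩ (1:ℝ), ?_⟩⟩
  intro h
  have := congrArg (fun v : EuclideanSpace ℝ (Fin n) => v ⟨0, hn⟩) h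
  simp [EuclideanSpace.single_apply] at this

include ha0 ha in
lemma polar_term_le (x : EuclideanSpace ℝ (Fin n))
    (ξ : {ξ : EuclideanSpace ℝ (Fin n) // ξ ≠ 0}) :
    (inner ℝ x (ξ : EuclideanSpace ℝ (Fin n)) : ℝ) / H ξ ≤ a⁻¹ * ‖x‖ := by
  have hξpos : (0:ℝ) < ‖(ξ : EuclideanSpace ℝ (Fin n))‖ := norm_pos_iff.2 ξ.2
  have hHpos : (0:ℝ) < H ξ := lt_of_lt_of_le (by positivity) (ha ξ)
  rw [div_le_iff₀ hHpos]
  calc (inner ℝ x (ξ : EuclideanSpace ℝ (Fin n)) : ℝ) ≤ ‖x‖ * ‖(ξ : EuclideanSpace ℝ (Fin n))‖ :=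
        real_inner_le_norm _ _
    _ = a⁻¹ * ‖x‖ * (a * ‖(ξ : EuclideanSpace ℝ (Fin n))‖) := by
        field_simp
    _ ≤ a⁻¹ * ‖x‖ * H ξ := by
        apply mul_le_mul_of_nonneg_left (ha ξ)
        positivity

include ha0 ha in
lemma polar_bdd (x : EuclideanSpace ℝ (Fin n)) :
    BddAbove (Set.range fun ξ : {ξ : EuclideanSpace ℝ (Fin n) // ξ ≠ 0} =>
      (inner ℝ x (ξ : EuclideanSpace ℝ (Fin n)) : ℝ) / H ξ) := by
  exact ⟨a⁻¹ * ‖x‖, by rintro y ⟨ξ, rfl⟩; exact polar_term_le ha0 ha x ξ⟩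

include hn ha0 ha in
lemma polar_le (x : EuclideanSpace ℝ (Fin n)) : polar H x ≤ a⁻¹ * ‖x‖ := by
  haveI := nonempty_ne_zero (n := n) hn
  exact ciSup_le fun ξ => polar_term_le ha0 ha x ξ

include hn hH ha0 ha in
lemma polar_nonneg (x : EuclideanSpace ℝ (Fin n)) : 0 ≤ polar H x := by
  haveI := nonempty_ne_zero (n := n) hn
  obtain ⟨ξ₀⟩ := (inferInstance : Nonempty {ξ : EuclideanSpace ℝ (Fin n) // ξ ≠ 0})
  rcases le_or_gt 0 ((inner ℝ x (ξ₀ : EuclideanSpace ℝ (Fin n)) : ℝ) / H ξ₀) with h | h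
  · exact le_trans h (le_ciSup (polar_bdd ha0 ha x) ξ₀)
  · have hneg : (-(ξ₀ : EuclideanSpace ℝ (Fin n))) ≠ 0 := by
      simpa using ξ₀.2
    have : (inner ℝ x (-(ξ₀ : EuclideanSpace ℝ (Fin n))) : ℝ) / H (-(ξ₀ : EuclideanSpace ℝ (Fin n)))
        = -((inner ℝ x (ξ₀ : EuclideanSpace ℝ (Fin n)) : ℝ) / H ξ₀) := by
      rw [inner_neg_right, aniso_neg hH, neg_div]
    have h2 : (0:ℝ) ≤ (inner ℝ x (-(ξ₀ : EuclideanSpace ℝ (Fin n))) : ℝ)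
        / H (-(ξ₀ : EuclideanSpace ℝ (Fin n))) := by rw [this]; linarith
    exact le_trans h2 (le_ciSup (polar_bdd ha0 ha x) ⟨-(ξ₀ : EuclideanSpace ℝ (Fin n)), hneg⟩)

include hn in
lemma polar_zero : polar H 0 = 0 := by
  haveI := nonempty_ne_zero (n := n) hn
  have : ∀ ξ : {ξ : EuclideanSpace ℝ (Fin n) // ξ ≠ 0},
      (inner ℝ (0 : EuclideanSpace ℝ (Fin n)) (ξ : EuclideanSpace ℝ (Fin n)) : ℝ) / H ξ = 0 := by
    intro ξ; rw [inner_zero_left, zero_div]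
  rw [polar]
  simp only [this, ciSup_const]

include hn in
lemma polar_smul (c : ℝ) (hc : 0 ≤ c) (x : EuclideanSpace ℝ (Fin n)) :
    polar H (c • x) = c * polar H x := by
  haveI := nonempty_ne_zero (n := n) hn
  rw [polar, polar, Real.mul_iSup_of_nonneg hc]
  congr 1
  ext ξ
  rw [inner_smul_left]
  simp only [starRingEnd_apply, star_trivial, div_eq_mul_inv]
  ring

include hn ha0 ha in
lemma polar_triangle (x y : EuclideanSpace ℝ (Fin n)) :
    polar H (x + y) ≤ polar H x + polar H y := by
  haveI := nonempty_ne_zero (n := n) hn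
  refine ciSup_le fun ξ => ?_
  rw [inner_add_left, add_div]
  exact add_le_add (le_ciSup (polar_bdd ha0 ha x) ξ) (le_ciSup (polar_bdd ha0 ha y) ξ)

include hn ha0 ha in
lemma polar_continuous : Continuous (polar H) := by
  have key : ∀ x y : EuclideanSpace ℝ (Fin n), polar H x - polar H y ≤ a⁻¹ * ‖x - y‖ := by
    intro x y
    have h1 : polar H x ≤ polar H (x - y) + polar H y := by
      have := polar_triangle hn ha0 ha (x - y) y
      simpa using this
    have h2 := polar_le hn ha0 ha (x - y)
    linarith
  have : LipschitzWith (Real.toNNReal a⁻¹) (polar H) := by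
    apply LipschitzWith.of_dist_le_mul
    intro x y
    rw [Real.dist_eq, Real.coe_toNNReal _ (by positivity), dist_eq_norm, abs_sub_le_iff]
    exact ⟨key x y, by rw [← norm_neg, neg_sub]; exact key y x⟩
  exact this.continuous

variable {b : ℝ} (hb0 : 0 < b) (hb : ∀ ξ : EuclideanSpace ℝ (Fin n), H ξ ≤ b * ‖ξ‖)

include hH ha0 ha hb0 hb in
lemma polar_ge (x : EuclideanSpace ℝ (Fin n)) (hx : x ≠ 0) : b⁻¹ * ‖x‖ ≤ polar H x := by
  have hxpos : (0:ℝ) < ‖x‖ := norm_pos_iff.2 hx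
  have hHpos : (0:ℝ) < H x := hH.1 x hx
  have h1 : b⁻¹ * ‖x‖ ≤ (inner ℝ x x : ℝ) / H x := by
    rw [real_inner_self_eq_norm_sq, le_div_iff₀ hHpos]
    calc b⁻¹ * ‖x‖ * H x ≤ b⁻¹ * ‖x‖ * (b * ‖x‖) := by
          apply mul_le_mul_of_nonneg_left (hb x); positivity
      _ = ‖x‖ ^ 2 := by field_simp
  exact le_trans h1 (le_ciSup (polar_bdd ha0 ha x) ⟨x, hx⟩)

end Polar

section Wulff

variable (hn : 0 < n) (hH : IsAnisoNorm H)
variable {a : ℝ} (ha0 : 0 < a) (ha : ∀ ξ : EuclideanSpace ℝ (Fin n), a * ‖ξ‖ ≤ H ξ)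
variable {b : ℝ} (hb0 : 0 < b) (hb : ∀ ξ : EuclideanSpace ℝ (Fin n), H ξ ≤ b * ‖ξ‖)

include hn ha0 ha in
lemma isOpen_wulff (r : ℝ) : IsOpen (wulff H r) :=
  isOpen_lt (polar_continuous hn ha0 ha) continuous_const

include hn in
lemma wulff_smul (r : ℝ) (hr : 0 < r) : wulff H r = r • wulff H 1 := by
  ext x
  constructor
  · intro hx
    refine ⟨r⁻¹ • x, ?_, by simp [smul_smul, mul_inv_cancel₀ hr.ne']⟩
    have : polar H (r⁻¹ • x) = r⁻¹ * polar H x := polar_smul hn r⁻¹ (by positivity) x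
    simp only [wulff, Set.mem_setOf_eq] at hx ⊢
    rw [this, ← div_eq_inv_mul, div_lt_one hr]
    exact hx
  · rintro ⟨y, hy, rfl⟩
    simp only [wulff, Set.mem_setOf_eq] at hy ⊢
    rw [polar_smul hn r hr.le y]
    calc r * polar H y < r * 1 := by exact (mul_lt_mul_iff_right₀ hr).2 hy
      _ = r := mul_one r

include hn in
lemma volume_wulff (r : ℝ) (hr : 0 < r) :
    volume (wulff H r) = ENNReal.ofReal (r ^ n) * volume (wulff H 1) := by
  rw [wulff_smul hn r hr, Measure.addHaar_smul volume r (wulff H 1)]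
  congr 2
  rw [finrank_euclideanSpace_fin, abs_of_nonneg (by positivity)]

include hn hH ha0 ha hb0 hb in
lemma volume_wulff_one_pos : 0 < volume (wulff H 1) := by
  have hsub : Metric.ball (0 : EuclideanSpace ℝ (Fin n)) a ⊆ wulff H 1 := by
    intro x hx
    simp only [Metric.mem_ball, dist_zero_right] at hx
    simp only [wulff, Set.mem_setOf_eq]
    calc polar H x ≤ a⁻¹ * ‖x‖ := polar_le hn ha0 ha x
      _ < a⁻¹ * a := by exact (mul_lt_mul_iff_right₀ (by positivity)).2 hx
      _ = 1 := inv_mul_cancel₀ ha0.ne'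
  exact lt_of_lt_of_le (Metric.measure_ball_pos volume 0 ha0) (measure_mono hsub)

include hn hH ha0 ha hb0 hb in
lemma volume_wulff_one_lt_top : volume (wulff H 1) < ⊤ := by
  have hsub : wulff H 1 ⊆ Metric.closedBall (0 : EuclideanSpace ℝ (Fin n)) b := by
    intro x hx
    simp only [wulff, Set.mem_setOf_eq] at hx
    simp only [Metric.mem_closedBall, dist_zero_right]
    rcases eq_or_ne x 0 with rfl | hx0
    · simp [hb0.le]
    · have := polar_ge hH ha0 ha hb0 hb x hx0
      have h2 : b⁻¹ * ‖x‖ < 1 := lt_of_le_of_lt this hx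
      calc ‖x‖ = b * (b⁻¹ * ‖x‖) := by field_simp
        _ ≤ b * 1 := by exact mul_le_mul_of_nonneg_left h2.le hb0.le
        _ = b := mul_one b
  exact lt_of_le_of_lt (measure_mono hsub) (measure_closedBall_lt_top)

end Wulff

/-- **`L¹` norm of the symmetrized function:**
`∫_{𝒲_R} u⋆ = (1/(n κ^{1/n})) ∫_0^M t^{1/n} g_*(t) dt + c₀ M`. -/
theorem integral_symmetrized_function {n : ℕ} (hn : 0 < n)
    (H : EuclideanSpace ℝ (Fin n) → ℝ) (hH : IsAnisoNorm H)
    (M : ℝ) (hM : 0 < M)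
    (κ : ℝ) (hκ : κ = (volume (wulff H 1)).toReal)
    (R : ℝ) (hR : R = (M / κ) ^ (1 / (n : ℝ)))
    (gs : ℝ → ℝ) (hgs_mono : MonotoneOn gs (Set.Icc 0 M))
    (hgs_nonneg : ∀ t ∈ Set.Icc (0 : ℝ) M, 0 ≤ gs t)
    (hgs_int : IntegrableOn gs (Set.Icc 0 M))
    (c₀ : ℝ) (hc₀ : 0 ≤ c₀)
    (ustar : EuclideanSpace ℝ (Fin n) → ℝ)
    (hustar : ∀ x, ustar x =
      (∫ t in (κ * (polar H x) ^ n)..M,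
        gs t / (n * κ ^ (1 / (n : ℝ)) * t ^ (1 - 1 / (n : ℝ)))) + c₀) :
    ∫ x in wulff H R, ustar x =
      (1 / (n * κ ^ (1 / (n : ℝ)))) * (∫ t in (0 : ℝ)..M, t ^ (1 / (n : ℝ)) * gs t) +
        c₀ * M := by
  obtain ⟨a, ha0, ha⟩ := aniso_lower hn hH
  obtain ⟨b, hb0, hb⟩ := aniso_upper hH
  have hn' : (0:ℝ) < (n:ℝ) := by exact_mod_cast hn
  have hinv_pos : (0:ℝ) < 1 / (n:ℝ) := by positivity
  have hinv_le : 1 / (n:ℝ) ≤ 1 := by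
    rw [div_le_one hn']; exact_mod_cast hn
  set p : EuclideanSpace ℝ (Fin n) → ℝ := polar H with hp_def
  have hp_meas : Measurable p := (polar_continuous hn ha0 ha).measurable
  have hp_nonneg : ∀ x, 0 ≤ p x := polar_nonneg hn hH ha0 ha
  -- κ facts
  have hvol_pos := volume_wulff_one_pos hn hH ha0 ha hb0 hb
  have hvol_fin := volume_wulff_one_lt_top hn hH ha0 ha hb0 hb
  have hκpos : 0 < κ := by
    rw [hκ]; exact ENNReal.toReal_pos hvol_pos.ne' hvol_fin.ne
  have hκpow_pos : (0:ℝ) < κ ^ (1 / (n:ℝ)) := Real.rpow_pos_of_pos hκpos _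
  have hvol1 : volume (wulff H 1) = ENNReal.ofReal κ := by
    rw [hκ, ENNReal.ofReal_toReal hvol_fin.ne]
  have hvolE : ∀ r : ℝ, 0 < r → volume (wulff H r) = ENNReal.ofReal (κ * r ^ n) := by
    intro r hr
    rw [volume_wulff hn r hr, hvol1, ← ENNReal.ofReal_mul (by positivity), mul_comm]
  -- R facts
  have hMκ : (0:ℝ) < M / κ := by positivity
  have hRpos : 0 < R := by rw [hR]; exact Real.rpow_pos_of_pos hMκ _
  have hRn : κ * R ^ n = M := by
    rw [hR, ← Real.rpow_natCast ((M/κ) ^ (1/(n:ℝ))) n, ← Real.rpow_mul hMκ.le]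
    rw [one_div, inv_mul_cancel₀ hn'.ne', Real.rpow_one]
    field_simp
  set S := wulff H R with hS_def
  have hSmeas : MeasurableSet S := (isOpen_wulff hn ha0 ha R).measurableSet
  have hvolS : volume S = ENNReal.ofReal M := by rw [hS_def, hvolE R hRpos, hRn]
  -- the radial variable
  set q : EuclideanSpace ℝ (Fin n) → ℝ := fun x => κ * p x ^ n with hq_def
  have hq_meas : Measurable q := (hp_meas.pow_const n).const_mul κ
  have hq_nonneg : ∀ x, 0 ≤ q x := fun x =>
    mul_nonneg hκpos.le (pow_nonneg (hp_nonneg x) n)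
  have hq_mem : ∀ x ∈ S, q x ∈ Set.Icc 0 M := by
    intro x hx
    refine ⟨hq_nonneg x, ?_⟩
    have hpx : p x < R := hx
    have : p x ^ n ≤ R ^ n := pow_le_pow_left₀ (hp_nonneg x) hpx.le n
    calc q x = κ * p x ^ n := rfl
      _ ≤ κ * R ^ n := by nlinarith
      _ = M := hRn
  -- clamped monotone version of gs
  set cl : ℝ → ℝ := fun t => min (max t 0) M with hcl_def
  have hcl_mono : Monotone cl := fun s t hst => by
    exact min_le_min (max_le_max hst le_rfl) le_rfl
  have hcl_mem : ∀ t, cl t ∈ Set.Icc 0 M := fun t =>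
    ⟨le_min (le_max_right _ _) hM.le, min_le_right _ _⟩
  have hcl_eq : ∀ t ∈ Set.Icc 0 M, cl t = t := by
    intro t ht
    simp only [hcl_def]
    rw [max_eq_left ht.1, min_eq_left ht.2]
  set g₀ : ℝ → ℝ := fun t => gs (cl t) with hg₀_def
  have hg₀_mono : Monotone g₀ := fun s t hst =>
    hgs_mono (hcl_mem s) (hcl_mem t) (hcl_mono hst)
  have hg₀_meas : Measurable g₀ := hg₀_mono.measurable
  have hg₀_eq : ∀ t ∈ Set.Icc 0 M, g₀ t = gs t := fun t ht => by
    rw [hg₀_def]; simp only []; rw [hcl_eq t ht]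
  have hg₀_nonneg : ∀ t, 0 ≤ g₀ t := fun t => hgs_nonneg _ (hcl_mem t)
  have hg₀_le : ∀ t, g₀ t ≤ gs M := fun t =>
    hgs_mono (hcl_mem t) ⟨hM.le, le_rfl⟩ (hcl_mem t).2
  -- the density
  set D : ℝ → ℝ := fun t => n * κ ^ (1 / (n:ℝ)) * t ^ (1 - 1 / (n:ℝ)) with hD_def
  have hD_meas : Measurable D :=
    ((Real.continuous_rpow_const (by linarith : (0:ℝ) ≤ 1 - 1/(n:ℝ))).measurable).const_mul _
  have hD_nonneg : ∀ t, 0 ≤ t → 0 ≤ D t := by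
    intro t ht
    have : (0:ℝ) ≤ t ^ (1 - 1/(n:ℝ)) := Real.rpow_nonneg ht _
    positivity
  have hD_pos : ∀ t, 0 < t → 0 < D t := by
    intro t ht
    have : (0:ℝ) < t ^ (1 - 1/(n:ℝ)) := Real.rpow_pos_of_pos ht _
    positivity
  set h₀ : ℝ → ℝ := fun t => g₀ t / D t with hh₀_def
  have hh₀_meas : Measurable h₀ := hg₀_meas.div hD_meas
  have hh₀_nonneg : ∀ t, 0 ≤ t → 0 ≤ h₀ t := fun t ht =>
    div_nonneg (hg₀_nonneg t) (hD_nonneg t ht)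
  have hh₀_eq : ∀ t ∈ Set.Icc 0 M, h₀ t = gs t / D t := fun t ht => by
    rw [hh₀_def]; simp only []; rw [hg₀_eq t ht]
  -- integrability of h₀ on (0, M]
  have hh₀_int : IntegrableOn h₀ (Set.Ioc 0 M) := by
    set C : ℝ := gs M / (n * κ ^ (1/(n:ℝ))) with hC_def
    have hCnonneg : 0 ≤ C := by
      apply div_nonneg (hgs_nonneg M ⟨hM.le, le_rfl⟩); positivity
    have hdom_int : IntegrableOn (fun t => C * t ^ (1/(n:ℝ) - 1)) (Set.Ioc 0 M) := by
      have h1 : IntervalIntegrable (fun t : ℝ => t ^ (1/(n:ℝ) - 1)) volume 0 M :=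
        intervalIntegral.intervalIntegrable_rpow' (by linarith)
      exact (h1.1).const_mul C
    apply Integrable.mono' hdom_int (hh₀_meas.aestronglyMeasurable.restrict)
    refine (ae_restrict_iff' measurableSet_Ioc).2 (Filter.Eventually.of_forall ?_)
    intro t ht
    rw [Real.norm_eq_abs, abs_of_nonneg (hh₀_nonneg t ht.1.le)]
    have hDt := hD_pos t ht.1
    have key : C * t ^ (1/(n:ℝ) - 1) = gs M / D t := by
      rw [hC_def, hD_def]
      simp only []
      rw [show (1/(n:ℝ) - 1) = -(1 - 1/(n:ℝ)) by ring, Real.rpow_neg ht.1.le]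
      field_simp
    rw [key, hh₀_def]
    simp only []
    exact (div_le_div_iff_of_pos_right hDt).2 (hg₀_le t)
  -- interval integrability on subintervals of [0, M]
  have hII : ∀ u v : ℝ, u ∈ Set.Icc 0 M → v ∈ Set.Icc 0 M →
      IntervalIntegrable h₀ volume u v := by
    intro u v hu hv
    rw [intervalIntegrable_iff]
    apply hh₀_int.mono_set
    intro t ht
    rcases le_total u v with huv | huv
    · rw [Set.uIoc_of_le huv] at ht
      exact ⟨lt_of_le_of_lt hu.1 ht.1, le_trans ht.2 hv.2⟩
    · rw [Set.uIoc_of_ge huv] at ht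
      exact ⟨lt_of_le_of_lt hv.1 ht.1, le_trans ht.2 hu.2⟩
  -- the profile function
  set G₀ : ℝ → ℝ := fun s => ∫ t in (cl s)..M, h₀ t with hG₀_def
  have hG₀_anti : Antitone G₀ := by
    intro s s' hss'
    have hcs := hcl_mem s; have hcs' := hcl_mem s'
    have hccl : cl s ≤ cl s' := hcl_mono hss'
    have hsplit : (∫ t in (cl s)..(cl s'), h₀ t) + (∫ t in (cl s')..M, h₀ t)
        = ∫ t in (cl s)..M, h₀ t :=
      intervalIntegral.integral_add_adjacent_intervals
        (hII _ _ hcs hcs') (hII _ _ hcs' ⟨hM.le, le_rfl⟩)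
    have hpos : 0 ≤ ∫ t in (cl s)..(cl s'), h₀ t := by
      apply intervalIntegral.integral_nonneg hccl
      intro u hu
      exact hh₀_nonneg u (le_trans hcs.1 hu.1)
    simp only [hG₀_def]
    linarith
  have hG₀_meas : Measurable G₀ := hG₀_anti.measurable
  have hG₀_nonneg : ∀ s, 0 ≤ G₀ s := by
    intro s
    apply intervalIntegral.integral_nonneg (hcl_mem s).2
    intro u hu
    exact hh₀_nonneg u (le_trans (hcl_mem s).1 hu.1)
  have hG₀_eq : ∀ s ∈ Set.Icc 0 M, G₀ s = ∫ t in s..M, h₀ t := by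
    intro s hs
    simp only [hG₀_def]
    rw [hcl_eq s hs]
  -- the measurable representative of ustar
  set Φ : EuclideanSpace ℝ (Fin n) → ℝ := fun x => G₀ (q x) + c₀ with hΦ_def
  have hΦ_meas : Measurable Φ := (hG₀_meas.comp hq_meas).add_const c₀
  have hΦ_nonneg : ∀ x, 0 ≤ Φ x := fun x => add_nonneg (hG₀_nonneg _) hc₀
  have hΦ_eq : Set.EqOn ustar Φ S := by
    intro x hx
    rw [hustar x, hΦ_def]
    simp only []
    congr 1
    rw [hG₀_eq (q x) (hq_mem x hx)]
    apply intervalIntegral.integral_congr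
    intro t ht
    rw [Set.uIcc_of_le (hq_mem x hx).2] at ht
    have htmem : t ∈ Set.Icc 0 M := ⟨le_trans (hq_nonneg x) ht.1, ht.2⟩
    rw [hh₀_eq t htmem, hD_def]
  -- radii of sublevel sets
  set rt : ℝ → ℝ := fun t => (t / κ) ^ (1 / (n:ℝ)) with hrt_def
  have hrt_pos : ∀ t ∈ Set.Ioc (0:ℝ) M, 0 < rt t := fun t ht =>
    Real.rpow_pos_of_pos (div_pos ht.1 hκpos) _
  have hrt_le : ∀ t ∈ Set.Ioc (0:ℝ) M, rt t ≤ R := by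
    intro t ht
    rw [hrt_def, hR]
    exact Real.rpow_le_rpow (div_pos ht.1 hκpos).le (by gcongr; exact ht.2) hinv_pos.le
  have hrt_pow : ∀ t ∈ Set.Ioc (0:ℝ) M, κ * rt t ^ n = t := by
    intro t ht
    have htκ : (0:ℝ) < t / κ := div_pos ht.1 hκpos
    rw [hrt_def]
    simp only []
    rw [← Real.rpow_natCast ((t/κ) ^ (1/(n:ℝ))) n, ← Real.rpow_mul htκ.le,
      one_div, inv_mul_cancel₀ hn'.ne', Real.rpow_one]
    field_simp
  have hlevel : ∀ t ∈ Set.Ioc (0:ℝ) M, {x | q x < t} ∩ S = wulff H (rt t) := by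
    intro t ht
    ext x
    have hiff : q x < t ↔ p x < rt t := by
      have hr := hrt_pow t ht
      have hrpos := hrt_pos t ht
      constructor
      · intro h1
        have h2 : p x ^ n < rt t ^ n := by
          rw [← mul_lt_mul_iff_right₀ hκpos, hr]
          exact h1
        exact lt_of_pow_lt_pow_left₀ n hrpos.le h2
      · intro h1
        have h2 : p x ^ n < rt t ^ n := by
          exact pow_lt_pow_left₀ h1 (hp_nonneg x) hn.ne'
        calc q x = κ * p x ^ n := rfl
          _ < κ * rt t ^ n := by nlinarith
          _ = t := hr
    constructor
    · rintro ⟨hx1, _⟩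
      exact hiff.1 hx1
    · intro hx
      have hpx : p x < rt t := hx
      exact ⟨hiff.2 hpx, lt_of_lt_of_le hpx (hrt_le t ht)⟩
  have hlevel_vol : ∀ t ∈ Set.Ioc (0:ℝ) M,
      volume ({x | q x < t} ∩ S) = ENNReal.ofReal t := by
    intro t ht
    rw [hlevel t ht, hvolE _ (hrt_pos t ht), hrt_pow t ht]
  -- the product kernel
  set ψ : (EuclideanSpace ℝ (Fin n)) × ℝ → ℝ≥0∞ := fun z =>
    Set.indicator {z : (EuclideanSpace ℝ (Fin n)) × ℝ | q z.1 < z.2}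
      (fun z => ENNReal.ofReal (h₀ z.2)) z with hψ_def
  have hψ_meas : Measurable ψ := by
    apply Measurable.indicator
    · exact ENNReal.measurable_ofReal.comp (hh₀_meas.comp measurable_snd)
    · exact measurableSet_lt (hq_meas.comp measurable_fst) measurable_snd
  have hψ_eq1 : ∀ x t, ψ (x, t)
      = Set.indicator (Set.Ioi (q x)) (fun t => ENNReal.ofReal (h₀ t)) t := by
    intro x t
    by_cases h : q x < t
    · simp [hψ_def, Set.indicator_apply, h, Set.mem_Ioi]
    · simp [hψ_def, Set.indicator_apply, h, Set.mem_Ioi]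
  have hψ_eq2 : ∀ x t, ψ (x, t)
      = Set.indicator {x | q x < t} (fun _ => ENNReal.ofReal (h₀ t)) x := by
    intro x t
    by_cases h : q x < t
    · simp [hψ_def, Set.indicator_apply, h]
    · simp [hψ_def, Set.indicator_apply, h]
  -- integrability of h₀ t * t
  have hIint : IntegrableOn (fun t => h₀ t * t) (Set.Ioc 0 M) := by
    apply Integrable.mono' ((hh₀_int.norm).const_mul M)
      ((hh₀_meas.mul measurable_id).aestronglyMeasurable.restrict)
    refine (ae_restrict_iff' measurableSet_Ioc).2 (Filter.Eventually.of_forall ?_)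
    intro t ht
    calc ‖h₀ t * t‖ = ‖h₀ t‖ * ‖t‖ := norm_mul _ _
      _ = ‖h₀ t‖ * t := by rw [Real.norm_eq_abs t, abs_of_nonneg ht.1.le]
      _ ≤ ‖h₀ t‖ * M := mul_le_mul_of_nonneg_left ht.2 (norm_nonneg _)
      _ = M * ‖h₀ t‖ := mul_comm _ _
  have hInonneg : 0 ≤ ∫ t in Set.Ioc (0:ℝ) M, h₀ t * t :=
    setIntegral_nonneg measurableSet_Ioc
      (fun t ht => mul_nonneg (hh₀_nonneg t ht.1.le) ht.1.le)
  -- the key lintegral computation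
  have hA1 : ∀ x ∈ S, ENNReal.ofReal (G₀ (q x)) = ∫⁻ t in Set.Ioc (0:ℝ) M, ψ (x, t) := by
    intro x hx
    have hqx := hq_mem x hx
    have hIocsub : Set.Ioc (q x) M ⊆ Set.Ioc 0 M := fun t ht =>
      ⟨lt_of_le_of_lt hqx.1 ht.1, ht.2⟩
    rw [hG₀_eq _ hqx, intervalIntegral.integral_of_le hqx.2,
      ofReal_integral_eq_lintegral_ofReal (hh₀_int.mono_set hIocsub)
        ((ae_restrict_iff' measurableSet_Ioc).2 (Filter.Eventually.of_forall
          (fun t ht => hh₀_nonneg t (le_trans hqx.1 ht.1.le))))]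
    have hset : Set.Ioi (q x) ∩ Set.Ioc 0 M = Set.Ioc (q x) M := by
      ext t
      simp only [Set.mem_inter_iff, Set.mem_Ioi, Set.mem_Ioc]
      constructor
      · rintro ⟨h1, _, h3⟩; exact ⟨h1, h3⟩
      · rintro ⟨h1, h2⟩; exact ⟨h1, lt_of_le_of_lt hqx.1 h1, h2⟩
    calc ∫⁻ t in Set.Ioc (q x) M, ENNReal.ofReal (h₀ t)
        = ∫⁻ t in Set.Ioi (q x) ∩ Set.Ioc 0 M, ENNReal.ofReal (h₀ t) := by rw [hset]
      _ = ∫⁻ t in Set.Ioi (q x), ENNReal.ofReal (h₀ t) ∂(volume.restrict (Set.Ioc 0 M)) := by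
          rw [Measure.restrict_restrict measurableSet_Ioi]
      _ = ∫⁻ t in Set.Ioc (0:ℝ) M,
            Set.indicator (Set.Ioi (q x)) (fun t => ENNReal.ofReal (h₀ t)) t := by
          rw [lintegral_indicator measurableSet_Ioi]
      _ = ∫⁻ t in Set.Ioc (0:ℝ) M, ψ (x, t) := by
          apply lintegral_congr
          intro t
          rw [hψ_eq1]
  have hA2 : ∀ t ∈ Set.Ioc (0:ℝ) M,
      (∫⁻ x in S, ψ (x, t)) = ENNReal.ofReal (h₀ t * t) := by
    intro t ht
    have hsetm : MeasurableSet {x | q x < t} := measurableSet_lt hq_meas measurable_const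
    calc ∫⁻ x in S, ψ (x, t)
        = ∫⁻ x in S, Set.indicator {x | q x < t} (fun _ => ENNReal.ofReal (h₀ t)) x := by
          apply lintegral_congr
          intro x
          rw [hψ_eq2]
      _ = ∫⁻ x in {x | q x < t}, ENNReal.ofReal (h₀ t) ∂(volume.restrict S) := by
          rw [lintegral_indicator hsetm]
      _ = ∫⁻ x in {x | q x < t} ∩ S, ENNReal.ofReal (h₀ t) := by
          rw [Measure.restrict_restrict hsetm]
      _ = ENNReal.ofReal (h₀ t) * volume ({x | q x < t} ∩ S) := by
          rw [setLIntegral_const]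
      _ = ENNReal.ofReal (h₀ t) * ENNReal.ofReal t := by rw [hlevel_vol t ht]
      _ = ENNReal.ofReal (h₀ t * t) := (ENNReal.ofReal_mul (hh₀_nonneg t ht.1.le)).symm
  have hkey : (∫⁻ x in S, ENNReal.ofReal (Φ x))
      = ENNReal.ofReal (∫ t in Set.Ioc (0:ℝ) M, h₀ t * t)
        + ENNReal.ofReal c₀ * ENNReal.ofReal M := by
    calc ∫⁻ x in S, ENNReal.ofReal (Φ x)
        = ∫⁻ x in S, (ENNReal.ofReal (G₀ (q x)) + ENNReal.ofReal c₀) := by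
          apply lintegral_congr
          intro x
          exact ENNReal.ofReal_add (hG₀_nonneg _) hc₀
      _ = (∫⁻ x in S, ENNReal.ofReal (G₀ (q x))) + ENNReal.ofReal c₀ * volume S := by
          rw [lintegral_add_right _ measurable_const, setLIntegral_const]
      _ = (∫⁻ x in S, ∫⁻ t in Set.Ioc (0:ℝ) M, ψ (x, t))
            + ENNReal.ofReal c₀ * ENNReal.ofReal M := by
          rw [hvolS]
          congr 1
          exact setLIntegral_congr_fun hSmeas hA1
      _ = (∫⁻ t in Set.Ioc (0:ℝ) M, ∫⁻ x in S, ψ (x, t))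
            + ENNReal.ofReal c₀ * ENNReal.ofReal M := by
          congr 1
          exact lintegral_lintegral_swap hψ_meas.aemeasurable
      _ = (∫⁻ t in Set.Ioc (0:ℝ) M, ENNReal.ofReal (h₀ t * t))
            + ENNReal.ofReal c₀ * ENNReal.ofReal M := by
          congr 1
          exact setLIntegral_congr_fun measurableSet_Ioc hA2
      _ = ENNReal.ofReal (∫ t in Set.Ioc (0:ℝ) M, h₀ t * t)
            + ENNReal.ofReal c₀ * ENNReal.ofReal M := by
          congr 1
          rw [ofReal_integral_eq_lintegral_ofReal hIint
            ((ae_restrict_iff' measurableSet_Ioc).2 (Filter.Eventually.of_forall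
              (fun t ht => mul_nonneg (hh₀_nonneg t ht.1.le) ht.1.le)))]
  -- final real computation
  have hstep0 : ∫ x in S, ustar x = ∫ x in S, Φ x :=
    setIntegral_congr_fun hSmeas hΦ_eq
  have hstep1 : ∫ x in S, Φ x = (∫⁻ x in S, ENNReal.ofReal (Φ x)).toReal :=
    integral_eq_lintegral_of_nonneg_ae (Filter.Eventually.of_forall hΦ_nonneg)
      hΦ_meas.aestronglyMeasurable.restrict
  have hfinal : ∫ t in Set.Ioc (0:ℝ) M, h₀ t * t
      = (1 / (n * κ ^ (1 / (n : ℝ)))) * ∫ t in (0:ℝ)..M, t ^ (1 / (n : ℝ)) * gs t := by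
    rw [intervalIntegral.integral_of_le hM.le]
    rw [← integral_const_mul]
    apply setIntegral_congr_fun measurableSet_Ioc
    intro t ht
    show h₀ t * t = 1 / (↑n * κ ^ (1 / (n:ℝ))) * (t ^ (1 / (n:ℝ)) * gs t)
    have hT : (0:ℝ) < t ^ (1 - 1/(n:ℝ)) := Real.rpow_pos_of_pos ht.1 _
    have htt : t ^ (1 - 1/(n:ℝ)) * t ^ (1/(n:ℝ)) = t := by
      rw [← Real.rpow_add ht.1]; norm_num
    rw [hh₀_eq t ⟨ht.1.le, ht.2⟩, hD_def]
    simp only []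
    have hκn : (0:ℝ) < (n:ℝ) * κ ^ (1/(n:ℝ)) := by positivity
    have h2 : t ^ (1/(n:ℝ)) * t ^ (1 - 1/(n:ℝ)) = t := by
      rw [← Real.rpow_add ht.1]; norm_num
    have hAA : 1 / ((n:ℝ) * κ ^ (1/(n:ℝ))) * ((n:ℝ) * κ ^ (1/(n:ℝ))) = 1 :=
      one_div_mul_cancel hκn.ne'
    rw [div_mul_eq_mul_div,
      div_eq_iff (ne_of_gt (by positivity :
        (0:ℝ) < (n:ℝ) * κ ^ (1/(n:ℝ)) * t ^ (1 - 1/(n:ℝ))))]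
    linear_combination (-(t ^ (1/(n:ℝ)) * gs t * t ^ (1 - 1/(n:ℝ)))) * hAA - gs t * h2
  rw [hstep0, hstep1, hkey, ENNReal.toReal_add (by simp)
      (by exact ENNReal.mul_ne_top ENNReal.ofReal_ne_top ENNReal.ofReal_ne_top),
    ENNReal.toReal_ofReal hInonneg, ENNReal.toReal_mul,
    ENNReal.toReal_ofReal hc₀, ENNReal.toReal_ofReal hM.le, hfinal]

end
end
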